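/- arXiv:1501.05253 — 8 statements merged into one kernel-verified Lean document; each statement's English description precedes it below -/
import Mathlib

section
/- Let D=(x₀,x₁)×(t₀,t₁)⊂ℝ² be a space–time rectangle, c>0, j∈ℕ, and let u₀ be j-times continuously differentiable on the closure of Ω_D⁻=(x₀−ct₁, x₁−ct₀). Define u(x,t):=u₀(x−ct) for (x,t)∈D. Then |u|²_{H^j_c(D)} ≤ (j+1) · min{ t₁−t₀ , (x₁−x₀)/c } · |u₀|²_{H^j(Ω_D⁻)}. The analogous bound holds for w(x,t)=w₀(x+ct) with Ω_D⁺=(x₀+ct₀, x₁+ct₁) in place of Ω_D⁻. -/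
open MeasureTheory Set

/-- Partial derivative in the space variable. -/
noncomputable def pdX (v : ℝ → ℝ → ℝ) : ℝ → ℝ → ℝ := fun x t => deriv (fun y => v y t) x

/-- Partial derivative in the time variable. -/
noncomputable def pdT (v : ℝ → ℝ → ℝ) : ℝ → ℝ → ℝ := fun x t => deriv (fun s => v x s) t

/-- Anisotropic derivative `D_c^α v = c^{-α_t} ∂_x^{α_x} ∂_t^{α_t} v`. -/
noncomputable def Dc (c : ℝ) (ax at' : ℕ) (v : ℝ → ℝ → ℝ) : ℝ → ℝ → ℝ :=
  fun x t => (c ^ at')⁻¹ * (pdX^[ax] (pdT^[at'] v)) x t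

/-- The seminorm `|v|_{W^{j,∞}_c(D)}` on the rectangle `D = (x₀,x₁)×(t₀,t₁)`:
the sup over multi-indices `α` with `|α| = j` of the sup norm of `D_c^α v` on `D`. -/
noncomputable def WinfC (c : ℝ) (j : ℕ) (v : ℝ → ℝ → ℝ) (x₀ x₁ t₀ t₁ : ℝ) : ℝ :=
  sSup {r : ℝ | ∃ ax at' : ℕ, ax + at' = j ∧
    ∃ x ∈ Set.Ioo x₀ x₁, ∃ t ∈ Set.Ioo t₀ t₁, r = |Dc c ax at' v x t|}

/-- The seminorm `|u|_{W^{j,∞}(a,b)}`: the sup norm of the `j`-th derivative on `(a,b)`. -/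
noncomputable def Winf1 (j : ℕ) (u : ℝ → ℝ) (a b : ℝ) : ℝ :=
  sSup {r : ℝ | ∃ z ∈ Set.Ioo a b, r = |iteratedDeriv j u z|}
/-- The squared seminorm `|v|²_{H^j_c(D)} = Σ_{|α|=j} ‖D_c^α v‖²_{L²(D)}`
on the rectangle `D = (x₀,x₁)×(t₀,t₁)`. -/
noncomputable def HjCsq (c : ℝ) (j : ℕ) (v : ℝ → ℝ → ℝ) (x₀ x₁ t₀ t₁ : ℝ) : ℝ :=
  ∑ k ∈ Finset.range (j + 1), ∫ x in x₀..x₁, ∫ t in t₀..t₁, (Dc c (j - k) k v x t) ^ 2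

set_option linter.unnecessarySeqFocus false
set_option maxHeartbeats 1000000

open Filter Topology in
private lemma iterDW_nhds {n : ℕ} {f : ℝ → ℝ} {s : Set ℝ} {x : ℝ} (h : s ∈ 𝓝 x) :
    iteratedDerivWithin n f s x = iteratedDeriv n f x := by
  rw [iteratedDerivWithin_eq_iteratedFDerivWithin, ← iteratedDerivWithin_univ,
    iteratedDerivWithin_eq_iteratedFDerivWithin]
  congr 1
  rw [← univ_inter s]
  exact iteratedFDerivWithin_inter h

private lemma hasDerivAt_iterD {j k : ℕ} {u₀ : ℝ → ℝ} {p q : ℝ}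
    (hu : ContDiffOn ℝ j u₀ (Ioo p q)) (hk : k < j) {z : ℝ} (hz : z ∈ Ioo p q) :
    HasDerivAt (iteratedDeriv k u₀) (iteratedDeriv (k + 1) u₀ z) z := by
  have hd : DifferentiableOn ℝ (iteratedDerivWithin k u₀ (Ioo p q)) (Ioo p q) :=
    hu.differentiableOn_iteratedDerivWithin (by exact_mod_cast hk) isOpen_Ioo.uniqueDiffOn
  have heq : iteratedDerivWithin k u₀ (Ioo p q) =ᶠ[nhds z] iteratedDeriv k u₀ := by
    filter_upwards [isOpen_Ioo.mem_nhds hz] with y hy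
    exact iterDW_nhds (isOpen_Ioo.mem_nhds hy)
  have h1 : DifferentiableAt ℝ (iteratedDeriv k u₀) z :=
    (heq.differentiableAt_iff).mp ((hd z hz).differentiableAt (isOpen_Ioo.mem_nhds hz))
  rw [iteratedDeriv_succ]
  exact h1.hasDerivAt

private lemma pdT_iter {j : ℕ} {u₀ : ℝ → ℝ} {p q a : ℝ}
    (hu : ContDiffOn ℝ j u₀ (Ioo p q)) :
    ∀ k, k ≤ j → ∀ x t : ℝ, x + a * t ∈ Ioo p q →
      pdT^[k] (fun x t => u₀ (x + a * t)) x t = a ^ k * iteratedDeriv k u₀ (x + a * t) := by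
  intro k
  induction k with
  | zero => intro _ x t _; simp
  | succ k ih =>
    intro hk x t hxt
    rw [Function.iterate_succ_apply']
    show deriv (fun s => pdT^[k] (fun x t => u₀ (x + a * t)) x s) t = _
    have hS : IsOpen {s : ℝ | x + a * s ∈ Ioo p q} :=
      isOpen_Ioo.preimage (by continuity : Continuous fun s : ℝ => x + a * s)
    have heq : (fun s => pdT^[k] (fun x t => u₀ (x + a * t)) x s)
        =ᶠ[nhds t] fun s => a ^ k * iteratedDeriv k u₀ (x + a * s) := by
      filter_upwards [hS.mem_nhds hxt] with s hs
      exact ih (Nat.le_of_succ_le hk) x s hs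
    rw [heq.deriv_eq]
    have h2 : HasDerivAt (fun s : ℝ => x + a * s) a t := by
      simpa using ((hasDerivAt_id t).const_mul a).const_add x
    have hchain : HasDerivAt (fun s => iteratedDeriv k u₀ (x + a * s))
        (iteratedDeriv (k + 1) u₀ (x + a * t) * a) t :=
      (hasDerivAt_iterD (j := j) (k := k) hu hk hxt).comp (h := fun s => x + a * s) t h2
    rw [(hchain.const_mul (a ^ k)).deriv]
    ring

private lemma pdX_pdT_iter {j : ℕ} {u₀ : ℝ → ℝ} {p q a : ℝ}
    (hu : ContDiffOn ℝ j u₀ (Ioo p q)) (k : ℕ) :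
    ∀ m, k + m ≤ j → ∀ x t : ℝ, x + a * t ∈ Ioo p q →
      pdX^[m] (pdT^[k] (fun x t => u₀ (x + a * t))) x t
        = a ^ k * iteratedDeriv (k + m) u₀ (x + a * t) := by
  intro m
  induction m with
  | zero => intro hm x t hxt; simpa using pdT_iter hu k (by omega) x t hxt
  | succ m ih =>
    intro hm x t hxt
    rw [Function.iterate_succ_apply']
    show deriv (fun y => pdX^[m] (pdT^[k] (fun x t => u₀ (x + a * t))) y t) x = _
    have hS : IsOpen {y : ℝ | y + a * t ∈ Ioo p q} :=
      isOpen_Ioo.preimage (by continuity : Continuous fun y : ℝ => y + a * t)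
    have heq : (fun y => pdX^[m] (pdT^[k] (fun x t => u₀ (x + a * t))) y t)
        =ᶠ[nhds x] fun y => a ^ k * iteratedDeriv (k + m) u₀ (y + a * t) := by
      filter_upwards [hS.mem_nhds hxt] with y hy
      exact ih (by omega) y t hy
    rw [heq.deriv_eq]
    have h2 : HasDerivAt (fun y : ℝ => y + a * t) 1 x := (hasDerivAt_id x).add_const (a * t)
    have hchain : HasDerivAt (fun y => iteratedDeriv (k + m) u₀ (y + a * t))
        (iteratedDeriv (k + m + 1) u₀ (x + a * t) * 1) x :=
      (hasDerivAt_iterD (j := j) (k := k + m) hu (by omega) hxt).comp (h := fun y => y + a * t) x h2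
    rw [(hchain.const_mul (a ^ k)).deriv]
    have : k + (m + 1) = k + m + 1 := by omega
    rw [this]
    ring

private lemma Dc_sq {c a : ℝ} (hc : 0 < c) (ha2 : a ^ 2 = c ^ 2) {j : ℕ} {u₀ : ℝ → ℝ}
    {p q : ℝ} (hu : ContDiffOn ℝ j u₀ (Ioo p q)) {k : ℕ} (hk : k ≤ j) {x t : ℝ}
    (hxt : x + a * t ∈ Ioo p q) :
    (Dc c (j - k) k (fun x t => u₀ (x + a * t)) x t) ^ 2
      = (iteratedDeriv j u₀ (x + a * t)) ^ 2 := by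
  have h := pdX_pdT_iter hu k (j - k) (by omega) x t hxt
  have hjk : k + (j - k) = j := by omega
  rw [hjk] at h
  unfold Dc
  rw [h]
  have hck : (c : ℝ) ^ k ≠ 0 := pow_ne_zero _ hc.ne'
  have hak : (a ^ k) ^ 2 = (c ^ k) ^ 2 := by
    rw [show (a ^ k) ^ 2 = (a ^ 2) ^ k from by ring, ha2]; ring
  have hexp : ((c ^ k)⁻¹ * (a ^ k * iteratedDeriv j u₀ (x + a * t))) ^ 2
      = ((c ^ k)⁻¹) ^ 2 * ((a ^ k) ^ 2 * (iteratedDeriv j u₀ (x + a * t)) ^ 2) := by ring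
  rw [hexp, hak]
  field_simp

private lemma G_props {j : ℕ} {u₀ : ℝ → ℝ} {p q : ℝ} (hpq : p < q)
    (hu : ContDiffOn ℝ j u₀ (Icc p q)) :
    ∃ C : ℝ, 0 ≤ C ∧ (∀ z ∈ Ioo p q, (iteratedDeriv j u₀ z) ^ 2 ≤ C)
      ∧ IntegrableOn (fun z => (iteratedDeriv j u₀ z) ^ 2) (Ioo p q)
      ∧ ContinuousOn (fun z => (iteratedDeriv j u₀ z) ^ 2) (Ioo p q) := by
  have hW : ContinuousOn (iteratedDerivWithin j u₀ (Icc p q)) (Icc p q) :=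
    hu.continuousOn_iteratedDerivWithin le_rfl (uniqueDiffOn_Icc hpq)
  obtain ⟨C₀, hC₀⟩ := isCompact_Icc.exists_bound_of_continuousOn hW
  have hC₀0 : 0 ≤ C₀ := le_trans (norm_nonneg _) (hC₀ p (left_mem_Icc.mpr hpq.le))
  have hEq : ∀ z ∈ Ioo p q, iteratedDeriv j u₀ z = iteratedDerivWithin j u₀ (Icc p q) z :=
    fun z hz => (iterDW_nhds (Icc_mem_nhds hz.1 hz.2)).symm
  have hb : ∀ z ∈ Ioo p q, (iteratedDeriv j u₀ z) ^ 2 ≤ C₀ ^ 2 := by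
    intro z hz
    rw [hEq z hz]
    have h := hC₀ z (Ioo_subset_Icc_self hz)
    rw [Real.norm_eq_abs] at h
    obtain ⟨h1, h2⟩ := abs_le.mp h
    exact sq_le_sq' h1 h2
  have hcont : ContinuousOn (fun z => (iteratedDeriv j u₀ z) ^ 2) (Ioo p q) := by
    have h1 : ContinuousOn (iteratedDeriv j u₀) (Ioo p q) :=
      (hW.mono Ioo_subset_Icc_self).congr hEq
    exact h1.pow 2
  have hint : IntegrableOn (fun z => (iteratedDeriv j u₀ z) ^ 2) (Ioo p q) := by
    refine ⟨hcont.aestronglyMeasurable measurableSet_Ioo, ?_⟩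
    apply HasFiniteIntegral.restrict_of_bounded (C := C₀ ^ 2) measure_Ioo_lt_top
    rw [ae_restrict_iff' measurableSet_Ioo]
    filter_upwards with z hz
    rw [Real.norm_eq_abs, abs_of_nonneg (sq_nonneg _)]
    exact hb z hz
  exact ⟨C₀ ^ 2, sq_nonneg _, hb, hint, hcont⟩

private lemma key (x₀ x₁ t₀ t₁ c a p q : ℝ) (hx : x₀ < x₁) (ht : t₀ < t₁) (hc : 0 < c)
    (ha : a = c ∨ a = -c) (hpq : p < q) (j : ℕ) (u₀ : ℝ → ℝ)
    (hu : ContDiffOn ℝ j u₀ (Icc p q))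
    (h1 : ∀ x ∈ Ioo x₀ x₁, ∀ t ∈ Icc t₀ t₁, x + a * t ∈ Ioo p q) :
    HjCsq c j (fun x t => u₀ (x + a * t)) x₀ x₁ t₀ t₁
      ≤ ((j : ℝ) + 1) * min (t₁ - t₀) ((x₁ - x₀) / c)
        * ∫ z in Ioo p q, (iteratedDeriv j u₀ z) ^ 2 := by
  have ha2 : a ^ 2 = c ^ 2 := by rcases ha with h | h <;> rw [h] <;> ring
  have ha0 : a ≠ 0 := by rcases ha with h | h <;> rw [h] <;> [exact hc.ne'; exact (neg_ne_zero.mpr hc.ne')]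
  have hO : ContDiffOn ℝ j u₀ (Ioo p q) := hu.mono Ioo_subset_Icc_self
  obtain ⟨C, hC0, hb, hint, hcont⟩ := G_props hpq hu
  set G : ℝ → ℝ := fun z => (iteratedDeriv j u₀ z) ^ 2 with hG
  set I : ℝ := ∫ z in Ioo p q, G z with hI
  have hI0 : 0 ≤ I := setIntegral_nonneg measurableSet_Ioo fun z _ => sq_nonneg _
  set J : ℝ := ∫ x in Ioo x₀ x₁, ∫ t in Ioo t₀ t₁, G (x + a * t) with hJ
  -- Step A : HjCsq = (j+1) * J
  have hstepA : HjCsq c j (fun x t => u₀ (x + a * t)) x₀ x₁ t₀ t₁ = ((j : ℝ) + 1) * J := by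
    unfold HjCsq
    have hsummand : ∀ k ∈ Finset.range (j + 1),
        (∫ x in x₀..x₁, ∫ t in t₀..t₁, (Dc c (j - k) k (fun x t => u₀ (x + a * t)) x t) ^ 2)
          = J := by
      intro k hk
      have hkj : k ≤ j := Nat.lt_succ_iff.mp (Finset.mem_range.mp hk)
      rw [hJ, intervalIntegral.integral_of_le hx.le, integral_Ioc_eq_integral_Ioo]
      refine setIntegral_congr_fun measurableSet_Ioo (fun x hxm => ?_)
      rw [intervalIntegral.integral_of_le ht.le, integral_Ioc_eq_integral_Ioo]
      exact setIntegral_congr_fun measurableSet_Ioo fun t htm =>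
        Dc_sq hc ha2 hO hkj (h1 x hxm t (Ioo_subset_Icc_self htm))
    rw [Finset.sum_congr rfl hsummand, Finset.sum_const, Finset.card_range, nsmul_eq_mul]
    push_cast
    ring
  -- Step B1 : J ≤ (x₁ - x₀)/c * I
  have hB1 : J ≤ (x₁ - x₀) / c * I := by
    have hFb : ∀ x ∈ Ioo x₀ x₁,
        (∫ t in Ioo t₀ t₁, G (x + a * t)) ≤ c⁻¹ * I ∧
          0 ≤ ∫ t in Ioo t₀ t₁, G (x + a * t) := by
      intro x hxm
      constructor
      · rw [← integral_Ioc_eq_integral_Ioo, ← intervalIntegral.integral_of_le ht.le]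
        rw [intervalIntegral.integral_comp_add_mul G ha0 x]
        rcases ha with hac | hac <;> rw [hac] at h1 ⊢
        · rw [smul_eq_mul, intervalIntegral.integral_of_le (by nlinarith),
            integral_Ioc_eq_integral_Ioo]
          have hsub : Ioo (x + c * t₀) (x + c * t₁) ⊆ Ioo p q := by
            intro z hz
            have hz1 := hz.1; have hz2 := hz.2
            have hzx : z = x + c * ((z - x) / c) := by field_simp; ring
            rw [hzx]
            refine h1 x hxm ((z - x) / c) ⟨?_, ?_⟩
            · rw [le_div_iff₀ hc]; nlinarith
            · rw [div_le_iff₀ hc]; nlinarith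
          have hmono := setIntegral_mono_set hint
            (Filter.Eventually.of_forall fun z => sq_nonneg _) hsub.eventuallyLE
          exact mul_le_mul_of_nonneg_left hmono (by positivity)
        · rw [intervalIntegral.integral_symm, smul_eq_mul,
            intervalIntegral.integral_of_le (by nlinarith), integral_Ioc_eq_integral_Ioo]
          have hsub : Ioo (x + -c * t₁) (x + -c * t₀) ⊆ Ioo p q := by
            intro z hz
            have hz1 := hz.1; have hz2 := hz.2
            have hzx : z = x + -c * ((x - z) / c) := by field_simp; ring
            rw [hzx]
            refine h1 x hxm ((x - z) / c) ⟨?_, ?_⟩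
            · rw [le_div_iff₀ hc]; nlinarith
            · rw [div_le_iff₀ hc]; nlinarith
          have hmono := setIntegral_mono_set hint
            (Filter.Eventually.of_forall fun z => sq_nonneg _) hsub.eventuallyLE
          have heq : (-c)⁻¹ * -(∫ z in Ioo (x + -c*t₁) (x + -c*t₀), G z)
              = c⁻¹ * ∫ z in Ioo (x + -c*t₁) (x + -c*t₀), G z := by
            field_simp
          rw [heq]
          exact mul_le_mul_of_nonneg_left hmono (by positivity)
      · exact setIntegral_nonneg measurableSet_Ioo fun t _ => sq_nonneg _
    have hnorm : ‖J‖ ≤ c⁻¹ * I * (volume (Ioo x₀ x₁)).toReal := by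
      rw [hJ]
      refine norm_setIntegral_le_of_norm_le_const measure_Ioo_lt_top
        fun x hxm => ?_
      rw [Real.norm_eq_abs, abs_of_nonneg (hFb x hxm).2]
      exact (hFb x hxm).1
    rw [Real.volume_Ioo, ENNReal.toReal_ofReal (by linarith)] at hnorm
    have := le_trans (le_abs_self J) hnorm
    calc J ≤ c⁻¹ * I * (x₁ - x₀) := by rw [Real.norm_eq_abs] at hnorm; linarith [le_abs_self J]
      _ = (x₁ - x₀) / c * I := by ring
  -- Step B2 : J ≤ (t₁ - t₀) * I
  have hB2 : J ≤ (t₁ - t₀) * I := by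
    have hswap : J = ∫ t in Ioo t₀ t₁, ∫ x in Ioo x₀ x₁, G (x + a * t) := by
      rw [hJ]
      apply integral_integral_swap (f := fun x t => G (x + a * t))
      rw [Measure.prod_restrict]
      have hcontU : ContinuousOn (fun pz : ℝ × ℝ => G (pz.1 + a * pz.2))
          (Ioo x₀ x₁ ×ˢ Ioo t₀ t₁) := by
        refine hcont.comp (Continuous.continuousOn (by continuity)) ?_
        intro pz hp
        exact h1 pz.1 hp.1 pz.2 (Ioo_subset_Icc_self hp.2)
      constructor
      · exact hcontU.aestronglyMeasurable (measurableSet_Ioo.prod measurableSet_Ioo)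
      · apply HasFiniteIntegral.restrict_of_bounded (C := C)
        · rw [Measure.prod_prod, Real.volume_Ioo, Real.volume_Ioo]
          exact ENNReal.mul_lt_top ENNReal.ofReal_lt_top ENNReal.ofReal_lt_top
        · rw [ae_restrict_iff' (measurableSet_Ioo.prod measurableSet_Ioo)]
          filter_upwards with pz hp
          rw [Real.norm_eq_abs, abs_of_nonneg (sq_nonneg _)]
          exact hb _ (h1 pz.1 hp.1 pz.2 (Ioo_subset_Icc_self hp.2))
    have hFb : ∀ t ∈ Ioo t₀ t₁,
        (∫ x in Ioo x₀ x₁, G (x + a * t)) ≤ I ∧ 0 ≤ ∫ x in Ioo x₀ x₁, G (x + a * t) := by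
      intro t htm
      constructor
      · rw [← integral_Ioc_eq_integral_Ioo, ← intervalIntegral.integral_of_le hx.le,
          intervalIntegral.integral_comp_add_right G (a * t),
          intervalIntegral.integral_of_le (by linarith), integral_Ioc_eq_integral_Ioo]
        have hsub : Ioo (x₀ + a * t) (x₁ + a * t) ⊆ Ioo p q := by
          intro z hz
          have hzx : z = (z - a * t) + a * t := by ring
          rw [hzx]
          exact h1 (z - a * t) ⟨by linarith [hz.1], by linarith [hz.2]⟩ t
            (Ioo_subset_Icc_self htm)
        exact setIntegral_mono_set hint
          (Filter.Eventually.of_forall fun z => sq_nonneg _) hsub.eventuallyLE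
      · exact setIntegral_nonneg measurableSet_Ioo fun x _ => sq_nonneg _
    have hnorm : ‖∫ t in Ioo t₀ t₁, ∫ x in Ioo x₀ x₁, G (x + a * t)‖
        ≤ I * (volume (Ioo t₀ t₁)).toReal := by
      refine norm_setIntegral_le_of_norm_le_const measure_Ioo_lt_top
        fun t htm => ?_
      rw [Real.norm_eq_abs, abs_of_nonneg (hFb t htm).2]
      exact (hFb t htm).1
    rw [Real.volume_Ioo, ENNReal.toReal_ofReal (by linarith), Real.norm_eq_abs] at hnorm
    rw [hswap]
    calc (∫ t in Ioo t₀ t₁, ∫ x in Ioo x₀ x₁, G (x + a * t))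
        ≤ I * (t₁ - t₀) := le_trans (le_abs_self _) hnorm
      _ = (t₁ - t₀) * I := by ring
  rw [hstepA, mul_assoc]
  refine mul_le_mul_of_nonneg_left ?_ (by positivity)
  rw [min_mul_of_nonneg _ _ hI0]
  exact le_min hB2 hB1

theorem stmt2 (x₀ x₁ t₀ t₁ c : ℝ) (hx : x₀ < x₁) (ht : t₀ < t₁) (hc : 0 < c)
    (j : ℕ) (u₀ w₀ : ℝ → ℝ)
    (hu : ContDiffOn ℝ j u₀ (Set.Icc (x₀ - c * t₁) (x₁ - c * t₀)))
    (hw : ContDiffOn ℝ j w₀ (Set.Icc (x₀ + c * t₀) (x₁ + c * t₁))) :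
    HjCsq c j (fun x t => u₀ (x - c * t)) x₀ x₁ t₀ t₁
      ≤ (j + 1) * min (t₁ - t₀) ((x₁ - x₀) / c) *
        ∫ z in Set.Ioo (x₀ - c * t₁) (x₁ - c * t₀), (iteratedDeriv j u₀ z) ^ 2 ∧
    HjCsq c j (fun x t => w₀ (x + c * t)) x₀ x₁ t₀ t₁
      ≤ (j + 1) * min (t₁ - t₀) ((x₁ - x₀) / c) *
        ∫ z in Set.Ioo (x₀ + c * t₀) (x₁ + c * t₁), (iteratedDeriv j w₀ z) ^ 2 := by
  constructor
  · have hfun : (fun x t => u₀ (x - c * t)) = fun x t => u₀ (x + (-c) * t) := by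
      funext x t; ring_nf
    rw [hfun]
    refine key x₀ x₁ t₀ t₁ c (-c) (x₀ - c * t₁) (x₁ - c * t₀) hx ht hc (Or.inr rfl)
      (by nlinarith) j u₀ hu ?_
    intro x hxm t htm
    simp only [mem_Ioo, mem_Icc] at *
    constructor <;> nlinarith [hxm.1, hxm.2, htm.1, htm.2]
  · refine key x₀ x₁ t₀ t₁ c c (x₀ + c * t₀) (x₁ + c * t₁) hx ht hc (Or.inl rfl)
      (by nlinarith) j w₀ hw ?_
    intro x hxm t htm
    simp only [mem_Ioo, mem_Icc] at *
    constructor <;> nlinarith [hxm.1, hxm.2, htm.1, htm.2]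
end

section
/- Let D=(x₀,x₁)×(t₀,t₁)⊂ℝ² be a space–time rectangle, c>0, and let u₀ be continuously differentiable on the closure of Ω_D⁻=(x₀−ct₁, x₁−ct₀). Define u(x,t):=u₀(x−ct) for (x,t)∈D. Then ‖u‖²_{H¹_c(D)} ≤ (1/c)·‖u₀‖²_{L²(Ω_D⁻)} + (2 h_D²/c)·|u₀|²_{H¹(Ω_D⁻)}, where h_D := (x₁−x₀)+c(t₁−t₀). -/
open MeasureTheory Set

lemma key_bound (x₀ x₁ t₀ t₁ c : ℝ) (hx : x₀ ≤ x₁) (ht : t₀ ≤ t₁) (hc : 0 < c)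
    (g : ℝ → ℝ) (hg : ContinuousOn g (Set.Icc (x₀ - c * t₁) (x₁ - c * t₀)))
    (F : ℝ → ℝ → ℝ)
    (hF : ∀ x ∈ Set.Ioc x₀ x₁, ∀ t ∈ Set.Ioc t₀ t₁, F x t = g (x - c * t) ^ 2) :
    (∫ x in x₀..x₁, ∫ t in t₀..t₁, F x t)
      ≤ ((x₁ - x₀) / c) * ∫ z in Set.Icc (x₀ - c * t₁) (x₁ - c * t₀), g z ^ 2 := by
  set a := x₀ - c * t₁ with ha
  set b := x₁ - c * t₀ with hb
  have hab : a ≤ b := by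
    simp only [ha, hb]
    nlinarith
  set J := ∫ z in Set.Icc a b, g z ^ 2 with hJ
  have hgint : IntegrableOn (fun z => g z ^ 2) (Set.Icc a b) := by
    exact (hg.pow 2).integrableOn_compact isCompact_Icc
  have hJ0 : 0 ≤ J := by
    apply setIntegral_nonneg measurableSet_Icc
    intro z _; positivity
  -- inner bound
  have hinner : ∀ x ∈ Set.Ioc x₀ x₁,
      (∫ t in t₀..t₁, F x t) = c⁻¹ * ∫ z in x - c * t₁..x - c * t₀, g z ^ 2 := by
    intro x hxm
    have hcong : (∫ t in t₀..t₁, F x t) = ∫ t in t₀..t₁, g (x - c * t) ^ 2 := by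
      rw [intervalIntegral.integral_of_le ht, intervalIntegral.integral_of_le ht]
      exact MeasureTheory.setIntegral_congr_fun measurableSet_Ioc
        (fun t htm => hF x hxm t htm)
    rw [hcong]
    have := intervalIntegral.integral_comp_sub_mul (fun z => g z ^ 2) (ne_of_gt hc) x
      (a := t₀) (b := t₁)
    rw [this, smul_eq_mul]
  have hbound : ∀ x ∈ Set.Ioc x₀ x₁, ‖∫ t in t₀..t₁, F x t‖ ≤ c⁻¹ * J := by
    intro x hxm
    rw [hinner x hxm]
    have hsub : Set.Ioc (x - c * t₁) (x - c * t₀) ⊆ Set.Icc a b := by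
      intro z hz
      constructor
      · calc a ≤ x - c * t₁ := by simp only [ha]; nlinarith [hxm.1, hxm.2]
          _ ≤ z := le_of_lt hz.1
      · calc z ≤ x - c * t₀ := hz.2
          _ ≤ b := by simp only [hb]; nlinarith [hxm.1, hxm.2]
    have hle : x - c * t₁ ≤ x - c * t₀ := by nlinarith
    have h1 : (∫ z in x - c * t₁..x - c * t₀, g z ^ 2) ≤ J := by
      rw [intervalIntegral.integral_of_le hle]
      apply MeasureTheory.setIntegral_mono_set hgint
      · filter_upwards with z using by positivity
      · exact HasSubset.Subset.eventuallyLE hsub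
    have h2 : 0 ≤ ∫ z in x - c * t₁..x - c * t₀, g z ^ 2 :=
      intervalIntegral.integral_nonneg hle (fun z _ => by positivity)
    rw [Real.norm_eq_abs, abs_of_nonneg (by positivity)]
    have : (0:ℝ) ≤ c⁻¹ := by positivity
    exact mul_le_mul_of_nonneg_left h1 this
  have := intervalIntegral.norm_integral_le_of_norm_le_const
    (C := c⁻¹ * J) (a := x₀) (b := x₁) (f := fun x => ∫ t in t₀..t₁, F x t)
    (by intro x hxm; rw [Set.uIoc_of_le hx] at hxm; exact hbound x hxm)
  calc (∫ x in x₀..x₁, ∫ t in t₀..t₁, F x t)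
      ≤ ‖∫ x in x₀..x₁, ∫ t in t₀..t₁, F x t‖ := by
        rw [Real.norm_eq_abs]; exact le_abs_self _
    _ ≤ c⁻¹ * J * |x₁ - x₀| := this
    _ = ((x₁ - x₀) / c) * J := by rw [abs_of_nonneg (by linarith)]; ring

theorem stmt3 (x₀ x₁ t₀ t₁ c : ℝ) (hx : x₀ < x₁) (ht : t₀ < t₁) (hc : 0 < c)
    (u₀ : ℝ → ℝ) (hD : ℝ)
    (hu : ContDiffOn ℝ 1 u₀ (Set.Icc (x₀ - c * t₁) (x₁ - c * t₀)))
    (hhD : hD = (x₁ - x₀) + c * (t₁ - t₀)) :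
    hD⁻¹ * (∫ x in x₀..x₁, ∫ t in t₀..t₁, (u₀ (x - c * t)) ^ 2)
      + hD * HjCsq c 1 (fun x t => u₀ (x - c * t)) x₀ x₁ t₀ t₁
      ≤ (1 / c) * (∫ z in Set.Ioo (x₀ - c * t₁) (x₁ - c * t₀), (u₀ z) ^ 2)
        + (2 * hD ^ 2 / c) *
          ∫ z in Set.Ioo (x₀ - c * t₁) (x₁ - c * t₀), (deriv u₀ z) ^ 2 := by
  set a := x₀ - c * t₁ with ha
  set b := x₁ - c * t₀ with hb
  have hab : a < b := by simp only [ha, hb]; nlinarith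
  set g : ℝ → ℝ := derivWithin u₀ (Set.Icc a b) with hg
  have hgc : ContinuousOn g (Set.Icc a b) :=
    hu.continuousOn_derivWithin (uniqueDiffOn_Icc hab) le_rfl
  have hDpos : 0 < hD := by rw [hhD]; nlinarith
  -- differentiability and deriv identification on the open interval
  have hder : ∀ z ∈ Set.Ioo a b, DifferentiableAt ℝ u₀ z := by
    intro z hz
    exact ((hu.differentiableOn one_ne_zero) z (Set.Ioo_subset_Icc_self hz)).differentiableAt
      (Icc_mem_nhds hz.1 hz.2)
  have hgd : ∀ z ∈ Set.Ioo a b, g z = deriv u₀ z := by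
    intro z hz
    exact derivWithin_of_mem_nhds (Icc_mem_nhds hz.1 hz.2)
  have hmem : ∀ x ∈ Set.Ioc x₀ x₁, ∀ t ∈ Set.Ioc t₀ t₁, x - c * t ∈ Set.Ioo a b := by
    intro x hxm t htm
    constructor
    · simp only [ha]; nlinarith [hxm.1, hxm.2, htm.1, htm.2]
    · simp only [hb]; nlinarith [hxm.1, hxm.2, htm.1, htm.2]
  set u : ℝ → ℝ → ℝ := fun x t => u₀ (x - c * t) with hudef
  -- identify the Dc derivatives
  have hDc10 : ∀ x ∈ Set.Ioc x₀ x₁, ∀ t ∈ Set.Ioc t₀ t₁,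
      (Dc c 1 0 u x t) ^ 2 = g (x - c * t) ^ 2 := by
    intro x hxm t htm
    have hz := hmem x hxm t htm
    have h1 : HasDerivAt (fun y => u₀ (y - c * t)) (deriv u₀ (x - c * t)) x := by
      have := HasDerivAt.comp x ((hder _ hz).hasDerivAt) ((hasDerivAt_id x).sub_const (c * t))
      simpa [Function.comp_def] using this
    have : Dc c 1 0 u x t = deriv u₀ (x - c * t) := by
      simp only [Dc, pdX, pdT, Function.iterate_one, Function.iterate_zero, id_eq, pow_zero,
        inv_one, one_mul, hudef]
      exact h1.deriv
    rw [this, hgd _ hz]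
  have hDc01 : ∀ x ∈ Set.Ioc x₀ x₁, ∀ t ∈ Set.Ioc t₀ t₁,
      (Dc c 0 1 u x t) ^ 2 = g (x - c * t) ^ 2 := by
    intro x hxm t htm
    have hz := hmem x hxm t htm
    have hinn : HasDerivAt (fun s : ℝ => x - c * s) (-c) t := by
      have h0 : HasDerivAt (fun s : ℝ => c * s) c t := by
        simpa using (hasDerivAt_id t).const_mul c
      simpa using h0.const_sub x
    have h1 : HasDerivAt (fun s => u₀ (x - c * s)) (deriv u₀ (x - c * t) * (-c)) t :=
      HasDerivAt.comp t ((hder _ hz).hasDerivAt) hinn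
    have : Dc c 0 1 u x t = c⁻¹ * (deriv u₀ (x - c * t) * (-c)) := by
      simp only [Dc, pdX, pdT, Function.iterate_one, Function.iterate_zero, id_eq, pow_one,
        hudef]
      rw [h1.deriv]
    rw [this, hgd _ hz]
    field_simp
  -- bounds via key_bound
  set P := ∫ z in Set.Icc a b, u₀ z ^ 2 with hP
  set Q := ∫ z in Set.Icc a b, g z ^ 2 with hQ
  have hP0 : 0 ≤ P := setIntegral_nonneg measurableSet_Icc (fun z _ => by positivity)
  have hQ0 : 0 ≤ Q := setIntegral_nonneg measurableSet_Icc (fun z _ => by positivity)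
  have hA : (∫ x in x₀..x₁, ∫ t in t₀..t₁, (u₀ (x - c * t)) ^ 2) ≤ ((x₁ - x₀) / c) * P :=
    key_bound x₀ x₁ t₀ t₁ c hx.le ht.le hc u₀ hu.continuousOn _
      (fun x _ t _ => rfl)
  have hB0 : (∫ x in x₀..x₁, ∫ t in t₀..t₁, (Dc c 1 0 u x t) ^ 2) ≤ ((x₁ - x₀) / c) * Q :=
    key_bound x₀ x₁ t₀ t₁ c hx.le ht.le hc g hgc _ hDc10
  have hB1 : (∫ x in x₀..x₁, ∫ t in t₀..t₁, (Dc c 0 1 u x t) ^ 2) ≤ ((x₁ - x₀) / c) * Q :=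
    key_bound x₀ x₁ t₀ t₁ c hx.le ht.le hc g hgc _ hDc01
  -- expand HjCsq
  have hHj : HjCsq c 1 u x₀ x₁ t₀ t₁ =
      (∫ x in x₀..x₁, ∫ t in t₀..t₁, (Dc c 1 0 u x t) ^ 2)
      + (∫ x in x₀..x₁, ∫ t in t₀..t₁, (Dc c 0 1 u x t) ^ 2) := by
    simp [HjCsq, Finset.sum_range_succ]
  -- rewrite the RHS integrals
  have hRQ : (∫ z in Set.Ioo a b, (deriv u₀ z) ^ 2) = Q := by
    rw [hQ, MeasureTheory.integral_Icc_eq_integral_Ioo]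
    exact (MeasureTheory.setIntegral_congr_fun measurableSet_Ioo
      (fun z hz => by rw [hgd z hz])).symm
  have hRP : (∫ z in Set.Ioo a b, (u₀ z) ^ 2) = P := by
    rw [hP, MeasureTheory.integral_Icc_eq_integral_Ioo]
  rw [hHj, hRP, hRQ]
  -- final arithmetic
  have hxleq : x₁ - x₀ ≤ hD := by rw [hhD]; nlinarith
  have L1 : hD⁻¹ * (∫ x in x₀..x₁, ∫ t in t₀..t₁, (u₀ (x - c * t)) ^ 2) ≤ (1 / c) * P := by
    have h1 : hD⁻¹ * (∫ x in x₀..x₁, ∫ t in t₀..t₁, (u₀ (x - c * t)) ^ 2)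
        ≤ hD⁻¹ * (((x₁ - x₀) / c) * P) := mul_le_mul_of_nonneg_left hA (by positivity)
    have h2 : hD⁻¹ * (((x₁ - x₀) / c) * P) ≤ (1 / c) * P := by
      rw [show hD⁻¹ * (((x₁ - x₀) / c) * P) = ((x₁ - x₀) / hD) * ((1 / c) * P) by
        field_simp]
      exact mul_le_of_le_one_left (by positivity) ((div_le_one hDpos).mpr hxleq)
    linarith
  have L2 : hD * ((∫ x in x₀..x₁, ∫ t in t₀..t₁, (Dc c 1 0 u x t) ^ 2)
      + (∫ x in x₀..x₁, ∫ t in t₀..t₁, (Dc c 0 1 u x t) ^ 2)) ≤ (2 * hD ^ 2 / c) * Q := by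
    have h1 : hD * ((∫ x in x₀..x₁, ∫ t in t₀..t₁, (Dc c 1 0 u x t) ^ 2)
        + (∫ x in x₀..x₁, ∫ t in t₀..t₁, (Dc c 0 1 u x t) ^ 2))
        ≤ hD * (2 * (((x₁ - x₀) / c) * Q)) :=
      mul_le_mul_of_nonneg_left (by linarith) hDpos.le
    have h2 : hD * (2 * (((x₁ - x₀) / c) * Q)) ≤ (2 * hD ^ 2 / c) * Q := by
      rw [show hD * (2 * (((x₁ - x₀) / c) * Q)) = ((x₁ - x₀) * hD) * ((2 / c) * Q) by ring,
        show (2 * hD ^ 2 / c) * Q = (hD * hD) * ((2 / c) * Q) by ring]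
      exact mul_le_mul_of_nonneg_right (by nlinarith) (by positivity)
    linarith
  linarith
end

section
/- For all natural numbers s, p with 1 ≤ s ≤ p, the factorial quotient satisfies (p−s)! / (p+s)! ≤ (e/2)^{2s²/p} / p^{2s}. -/
open Real Finset

noncomputable def phiF (x : ℝ) : ℝ := (1+x) * Real.log (1+x) - (1-x) * Real.log (1-x) - 2*x

lemma phiF_zero : phiF 0 = 0 := by simp [phiF]

lemma phiF_one : phiF 1 = 2 * Real.log 2 - 2 := by
  simp [phiF]; ring_nf

lemma phiF_hasDerivAt {x : ℝ} (h1 : -1 < x) (h2 : x < 1) :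
    HasDerivAt phiF (Real.log (1+x) + Real.log (1-x)) x := by
  have h1' : (1:ℝ) + x ≠ 0 := by linarith
  have h2' : (1:ℝ) - x ≠ 0 := by linarith
  have i1 : HasDerivAt (fun y : ℝ => 1 + y) 1 x := (hasDerivAt_id x).const_add 1
  have i2 : HasDerivAt (fun y : ℝ => 1 - y) (-1) x := by
    simpa using (hasDerivAt_id x).const_sub 1
  have d1 : HasDerivAt (fun y : ℝ => (1+y) * Real.log (1+y))
      (1 * Real.log (1+x) + (1+x) * (1/(1+x))) x := i1.mul (i1.log h1')
  have d2 : HasDerivAt (fun y : ℝ => (1-y) * Real.log (1-y))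
      ((-1) * Real.log (1-x) + (1-x) * ((-1)/(1-x))) x := i2.mul (i2.log h2')
  have d3 : HasDerivAt (fun y : ℝ => 2*y) 2 x := by
    simpa using (hasDerivAt_id x).const_mul 2
  have := (d1.sub d2).sub d3
  refine this.congr_deriv ?_
  field_simp
  ring

lemma continuous_phiF : Continuous phiF := by
  have h : phiF = fun x => (fun y => y * Real.log y) (1+x) - (fun y => y * Real.log y) (1-x) - 2*x := by
    funext x; simp [phiF]
  rw [h]
  exact ((Real.continuous_mul_log.comp (continuous_const.add continuous_id)).sub
    (Real.continuous_mul_log.comp (continuous_const.sub continuous_id))).sub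
    (continuous_const.mul continuous_id)

lemma phiF_step {m d : ℝ} (hd : 0 ≤ d) (hdm : d ≤ m) (hmd : m + d < 1) :
    phiF (m+d) - phiF (m-d) ≤ 2*d*Real.log (1 - m^2) := by
  set D : ℝ → ℝ := fun x => phiF (m+x) - phiF (m-x) - 2*x*Real.log (1-m^2) with hD
  have key : ∀ x ∈ Set.Icc (0:ℝ) d, HasDerivAt D
      ((Real.log (1+(m+x)) + Real.log (1-(m+x))) + (Real.log (1+(m-x)) + Real.log (1-(m-x)))
        - 2*Real.log (1-m^2)) x := by
    intro x hx
    obtain ⟨hx0, hxd⟩ := hx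
    have hmx1 : m + x < 1 := by linarith
    have hmx0 : 0 ≤ m - x := by linarith
    have e1 : HasDerivAt (fun y : ℝ => m + y) 1 x := (hasDerivAt_id x).const_add m
    have e2 : HasDerivAt (fun y : ℝ => m - y) (-1) x := by
      simpa using (hasDerivAt_id x).const_sub m
    have p1 : HasDerivAt (fun y : ℝ => phiF (m+y))
        ((Real.log (1+(m+x)) + Real.log (1-(m+x))) * 1) x :=
      (phiF_hasDerivAt (by linarith) hmx1).comp x e1
    have p2 : HasDerivAt (fun y : ℝ => phiF (m-y))
        ((Real.log (1+(m-x)) + Real.log (1-(m-x))) * (-1)) x :=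
      (phiF_hasDerivAt (by linarith) (by linarith)).comp x e2
    have p3 : HasDerivAt (fun y : ℝ => 2*y*Real.log (1-m^2)) (2*Real.log (1-m^2)) x := by
      simpa [mul_comm, mul_assoc] using ((hasDerivAt_id x).const_mul (2*Real.log (1-m^2)))
    have := (p1.sub p2).sub p3
    refine this.congr_deriv ?_
    ring
  have anti : AntitoneOn D (Set.Icc 0 d) := by
    apply antitoneOn_of_deriv_nonpos (convex_Icc 0 d)
    · intro x hx
      exact (key x hx).continuousAt.continuousWithinAt
    · intro x hx
      exact (key x (interior_subset hx)).differentiableAt.differentiableWithinAt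
    · intro x hx
      rw [interior_Icc] at hx
      have hx' : x ∈ Set.Icc (0:ℝ) d := ⟨le_of_lt hx.1, le_of_lt hx.2⟩
      rw [(key x hx').deriv]
      obtain ⟨hx0, hxd⟩ := hx'
      have hmx1 : m + x < 1 := by linarith
      have hmx0 : 0 ≤ m - x := by linarith
      have hA : (0:ℝ) < 1 - (m+x)^2 := by nlinarith
      have hB : (0:ℝ) < 1 - (m-x)^2 := by nlinarith
      have hM : (0:ℝ) < 1 - m^2 := by nlinarith
      have l1 : Real.log (1+(m+x)) + Real.log (1-(m+x)) = Real.log (1-(m+x)^2) := by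
        rw [← Real.log_mul (by linarith) (by linarith)]; ring_nf
      have l2 : Real.log (1+(m-x)) + Real.log (1-(m-x)) = Real.log (1-(m-x)^2) := by
        rw [← Real.log_mul (by linarith) (by linarith)]; ring_nf
      rw [l1, l2]
      have hx2 : x^2 ≤ 1 := by nlinarith
      have prodle : (1-(m+x)^2) * (1-(m-x)^2) ≤ (1-m^2)^2 := by
        nlinarith [sq_nonneg x, sq_nonneg m, mul_nonneg (sq_nonneg x) (sq_nonneg m)]
      have : Real.log (1-(m+x)^2) + Real.log (1-(m-x)^2) ≤ 2*Real.log (1-m^2) := by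
        rw [← Real.log_mul (ne_of_gt hA) (ne_of_gt hB)]
        have h2 : Real.log ((1-(m+x)^2)*(1-(m-x)^2)) ≤ Real.log ((1-m^2)^2) :=
          Real.log_le_log (by positivity) prodle
        rw [Real.log_pow] at h2
        push_cast at h2
        linarith
      linarith
  have h0 : D 0 = 0 := by simp [hD]
  have := anti (Set.left_mem_Icc.mpr hd) (Set.mem_Icc.mpr ⟨hd, le_refl d⟩) hd
  rw [h0] at this
  simp only [hD] at this
  linarith

lemma log_ge_pade {u : ℝ} (hu : 0 ≤ u) : 2*u/(2+u) ≤ Real.log (1+u) := by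
  set f : ℝ → ℝ := fun y => Real.log (1+y) - 2*y/(2+y) with hf
  have key : ∀ y ∈ Set.Ici (0:ℝ), HasDerivAt f (1/(1+y) - 4/(2+y)^2) y := by
    intro y hy
    have hy0 : (0:ℝ) ≤ y := hy
    have e1 : HasDerivAt (fun z : ℝ => 1 + z) 1 y := (hasDerivAt_id y).const_add 1
    have d1 : HasDerivAt (fun z : ℝ => Real.log (1+z)) (1/(1+y)) y := by
      simpa using e1.log (by linarith)
    have d2 : HasDerivAt (fun z : ℝ => 2*z/(2+z)) (4/(2+y)^2) y := by
      have h := (((hasDerivAt_id y).const_mul 2)).div ((hasDerivAt_id y).const_add 2)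
        (show (2:ℝ) + id y ≠ 0 by simp only [id_eq]; intro h; linarith)
      simp only [id_eq] at h
      refine h.congr_deriv ?_
      field_simp
      ring
    exact d1.sub d2
  have mono : MonotoneOn f (Set.Ici 0) := by
    apply monotoneOn_of_deriv_nonneg (convex_Ici 0)
    · intro y hy; exact (key y hy).continuousAt.continuousWithinAt
    · intro y hy; exact (key y (interior_subset hy)).differentiableAt.differentiableWithinAt
    · intro y hy
      rw [interior_Ici] at hy
      have hy0 : (0:ℝ) < y := hy
      rw [(key y (le_of_lt hy0)).deriv]
      rw [div_sub_div _ _ (by positivity) (by positivity)]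
      apply div_nonneg _ (by positivity)
      nlinarith
  have h0 : f 0 = 0 := by simp [hf]
  have := mono (Set.mem_Ici.mpr (le_refl (0:ℝ))) (Set.mem_Ici.mpr hu) hu
  rw [h0] at this
  simp only [hf] at this
  linarith

noncomputable def hF (u : ℝ) : ℝ := phiF u + 2*(1-Real.log 2)*u^2

lemma hF_hasDerivAt {u : ℝ} (h1 : -1 < u) (h2 : u < 1) :
    HasDerivAt hF (Real.log (1+u) + Real.log (1-u) + 4*(1-Real.log 2)*u) u := by
  have hd := (phiF_hasDerivAt h1 h2).add ((hasDerivAt_pow 2 u).const_mul (2*(1-Real.log 2)))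
  have : HasDerivAt hF (Real.log (1+u) + Real.log (1-u) + 2*(1-Real.log 2)*(2*u^1)) u := hd
  convert this using 1
  ring

lemma exp_neg_quartic {y : ℝ} (h0 : 0 ≤ y) (h1 : y ≤ 1) :
    Real.exp (-y) ≤ 1 - y + y^2/2 - y^3/6 + (5/96)*y^4 := by
  have hb := Real.exp_bound (x := -y) (by rwa [abs_neg, abs_of_nonneg h0]) (n := 4) (by norm_num)
  have hsum : ∑ m ∈ Finset.range 4, (-y)^m / (Nat.factorial m : ℝ) = 1 - y + y^2/2 - y^3/6 := by
    simp [Finset.sum_range_succ, Nat.factorial]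
    ring
  rw [hsum, abs_neg, abs_of_nonneg h0] at hb
  have h2 := (abs_le.mp hb).2
  norm_num [Nat.factorial] at h2 ⊢
  linarith

lemma quartic_aux {u : ℝ} (hu0 : 0 ≤ u) (hu1 : u ≤ 3/4) :
    u^2 + 0.7532693*u^2 + 0.1182114*u^4 ≤ 1.2274112*u + 0.3081903*u^3 := by
  nlinarith [mul_nonneg (mul_nonneg (mul_nonneg hu0 hu0) hu0) (sub_nonneg.mpr hu1),
    mul_nonneg hu0 (sq_nonneg (u - 3/4)), mul_nonneg hu0 (sub_nonneg.mpr hu1)]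

set_option maxHeartbeats 2000000 in
lemma deriv_h_nonneg {u : ℝ} (hu0 : 0 ≤ u) (hu1 : u ≤ 3/4) :
    0 ≤ Real.log (1+u) + Real.log (1-u) + 4*(1-Real.log 2)*u := by
  have hL1 : Real.log 2 < 0.6931471808 := Real.log_two_lt_d9
  have hL2 : (0.6931471803 : ℝ) < Real.log 2 := Real.log_two_gt_d9
  set c : ℝ := 4*(1-Real.log 2) with hc
  have hc1 : 1.2274112 ≤ c := by rw [hc]; linarith
  have hc2 : c ≤ 1.2274113 := by rw [hc]; linarith
  have hy0 : 0 ≤ c*u := mul_nonneg (by linarith) hu0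
  have hy1 : c*u ≤ 1 := by nlinarith
  have hq := exp_neg_quartic hy0 hy1
  have b1 : 1.2274112*u ≤ c*u := by nlinarith
  have b2 : (c*u)^2 ≤ (1.2274113*u)^2 := pow_le_pow_left₀ hy0 (by nlinarith) 2
  have b3 : ((1.2274112:ℝ)*u)^3 ≤ (c*u)^3 := pow_le_pow_left₀ (by positivity) (by nlinarith) 3
  have b4 : (c*u)^4 ≤ ((1.2274113:ℝ)*u)^4 := pow_le_pow_left₀ hy0 (by nlinarith) 4
  have e2 : (c*u)^2/2 ≤ 0.7532693*u^2 := by nlinarith [b2]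
  have e3 : 0.3081903*u^3 ≤ (c*u)^3/6 := by nlinarith [b3]
  have e4 : (5/96)*(c*u)^4 ≤ 0.1182114*u^4 := by nlinarith [b4]
  have hpoly : 1 - c*u + (c*u)^2/2 - (c*u)^3/6 + (5/96)*(c*u)^4 ≤ 1 - u^2 := by
    have hq4 := quartic_aux hu0 hu1
    linarith
  have h1u : (0:ℝ) < 1 - u^2 := by nlinarith
  have hexp : Real.exp (-(c*u)) ≤ 1 - u^2 := le_trans hq hpoly
  have hlog : -(c*u) ≤ Real.log (1-u^2) := by
    have := Real.log_le_log (Real.exp_pos _) hexp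
    rwa [Real.log_exp] at this
  have hu1' : (0:ℝ) < 1 - u := by linarith
  have hsplit : Real.log (1-u^2) = Real.log (1+u) + Real.log (1-u) := by
    rw [← Real.log_mul (by linarith) (by linarith)]
    ring_nf
  rw [hsplit] at hlog
  linarith

lemma exp_four_lt : Real.exp 4 < 57.6 := by
  have h1 : Real.exp 1 < 2.7182818286 := Real.exp_one_lt_d9
  have h4 : Real.exp 4 = (Real.exp 1)^4 := by
    rw [← Real.exp_nat_mul]; norm_num
  rw [h4]
  have h0 : (0:ℝ) ≤ Real.exp 1 := (Real.exp_pos 1).le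
  calc (Real.exp 1)^4 < 2.7182818286^4 := by
        exact pow_lt_pow_left₀ h1 h0 (by norm_num)
    _ < 57.6 := by norm_num

lemma deriv_h_nonpos {u : ℝ} (hu0 : 17/20 ≤ u) (hu1 : u < 1) :
    Real.log (1+u) + Real.log (1-u) + 4*(1-Real.log 2)*u ≤ 0 := by
  have hL1 : Real.log 2 < 0.6931471808 := Real.log_two_lt_d9
  have hL2 : (0.6931471803 : ℝ) < Real.log 2 := Real.log_two_gt_d9
  have h1u : (0:ℝ) < 1 - u^2 := by nlinarith
  have hsplit : Real.log (1+u) + Real.log (1-u) = Real.log (1-u^2) := by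
    rw [← Real.log_mul (by linarith) (by nlinarith)]
    ring_nf
  have hb : 1 - u^2 ≤ 0.2775 := by nlinarith
  have hlog1 : Real.log (1-u^2) ≤ Real.log 0.2775 := Real.log_le_log h1u hb
  -- log 0.2775 + 4*(1 - log 2) < 0  ⟺  0.2775 * exp 4 < 16
  have hkey : Real.log 0.2775 + 4*(1-Real.log 2) < 0 := by
    have he : Real.exp (Real.log 0.2775 + 4*(1-Real.log 2)) < 1 := by
      rw [Real.exp_add, Real.exp_log (by norm_num : (0.2775:ℝ) > 0)]
      have : Real.exp (4*(1-Real.log 2)) = Real.exp 4 / 2^4 := by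
        rw [show (4:ℝ)*(1-Real.log 2) = 4 - 4*Real.log 2 by ring, Real.exp_sub]
        congr 1
        rw [show (4:ℝ)*Real.log 2 = Real.log (2^4) by rw [Real.log_pow]; push_cast; ring]
        rw [Real.exp_log (by norm_num)]
      rw [this, show (0.2775:ℝ) * (Real.exp 4 / 2^4) = 0.2775/16 * Real.exp 4 by ring]
      have h4 := exp_four_lt
      linarith
    by_contra hcon
    push_neg at hcon
    have := Real.exp_le_exp.mpr hcon
    rw [Real.exp_zero] at this
    linarith
  have hmu : 4*(1-Real.log 2)*u ≤ 4*(1-Real.log 2)*1 :=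
    mul_le_mul_of_nonneg_left hu1.le (by linarith)
  linarith

lemma hF_nonneg {u : ℝ} (hu0 : 0 ≤ u) (hu1 : u < 1) : 0 ≤ hF u := by
  rcases le_or_gt u (3/4) with hA | hA
  · -- region 1 : monotone from 0
    have key : ∀ x ∈ Set.Icc (0:ℝ) (3/4), HasDerivAt hF
        (Real.log (1+x) + Real.log (1-x) + 4*(1-Real.log 2)*x) x := by
      intro x hx
      exact hF_hasDerivAt (by linarith [hx.1]) (by linarith [hx.2])
    have mono : MonotoneOn hF (Set.Icc 0 (3/4)) := by
      apply monotoneOn_of_deriv_nonneg (convex_Icc 0 (3/4))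
      · intro x hx; exact (key x hx).continuousAt.continuousWithinAt
      · intro x hx; exact (key x (interior_subset hx)).differentiableAt.differentiableWithinAt
      · intro x hx
        rw [interior_Icc] at hx
        rw [(key x ⟨hx.1.le, hx.2.le⟩).deriv]
        exact deriv_h_nonneg hx.1.le hx.2.le
    have h0 : hF 0 = 0 := by simp [hF, phiF_zero]
    have := mono (Set.mem_Icc.mpr ⟨le_refl 0, by norm_num⟩) (Set.mem_Icc.mpr ⟨hu0, hA⟩) hu0
    rw [h0] at this
    exact this
  rcases le_or_gt u (17/20) with hB | hB
  · -- region 2 : direct estimate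
    have hL1 : Real.log 2 < 0.6931471808 := Real.log_two_lt_d9
    have hL2 : (0.6931471803 : ℝ) < Real.log 2 := Real.log_two_gt_d9
    have l1 : 2*u/(2+u) ≤ Real.log (1+u) := log_ge_pade hu0
    have l2 : Real.log (1-u) ≤ Real.log (1/4) := by
      apply Real.log_le_log (by linarith) (by linarith)
    have l2' : Real.log (1/4 : ℝ) = -(2*Real.log 2) := by
      rw [one_div, Real.log_inv, show (4:ℝ) = 2^2 by norm_num, Real.log_pow]
      push_cast; ring
    rw [l2'] at l2
    have t1 : (1+u)*(2*u/(2+u)) ≤ (1+u)*Real.log (1+u) :=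
      mul_le_mul_of_nonneg_left l1 (by linarith)
    have t2 : (1-u)*Real.log (1-u) ≤ (1-u)*(-(2*Real.log 2)) :=
      mul_le_mul_of_nonneg_left l2 (by linarith)
    have hden : (0:ℝ) < 2+u := by linarith
    have haux : (0:ℝ) ≤ (2+u)*(u^2+u-1) := by nlinarith
    have hq : 0 ≤ 2*u*(1+u) + ((1-u)*(2*Real.log 2) - 2*u + 2*(1-Real.log 2)*u^2) * (2+u) := by
      nlinarith [mul_nonneg (sub_nonneg.mpr hL1.le) haux, sq_nonneg (u - 4/5),
        mul_nonneg (sub_nonneg.mpr hA.le) (sub_nonneg.mpr hB)]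
    have main : 0 ≤ (1+u)*(2*u/(2+u)) + (1-u)*(2*Real.log 2) - 2*u + 2*(1-Real.log 2)*u^2 := by
      have expand : (1+u)*(2*u/(2+u)) + (1-u)*(2*Real.log 2) - 2*u + 2*(1-Real.log 2)*u^2
          = (2*u*(1+u) + ((1-u)*(2*Real.log 2) - 2*u + 2*(1-Real.log 2)*u^2)*(2+u)) / (2+u) := by
        field_simp
        ring
      rw [expand]
      exact div_nonneg hq hden.le
    simp only [hF, phiF]
    nlinarith [t1, t2, main]
  · -- region 3 : antitone with limit 0 at 1
    have key : ∀ x ∈ Set.Ico (17/20 : ℝ) 1, HasDerivAt hF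
        (Real.log (1+x) + Real.log (1-x) + 4*(1-Real.log 2)*x) x := by
      intro x hx
      exact hF_hasDerivAt (by linarith [hx.1]) hx.2
    have anti : AntitoneOn hF (Set.Ico (17/20 : ℝ) 1) := by
      apply antitoneOn_of_deriv_nonpos (convex_Ico _ _)
      · intro x hx; exact (key x hx).continuousAt.continuousWithinAt
      · intro x hx
        rw [interior_Ico] at hx
        exact (key x ⟨hx.1.le, hx.2⟩).differentiableAt.differentiableWithinAt
      · intro x hx
        rw [interior_Ico] at hx
        rw [(key x ⟨hx.1.le, hx.2⟩).deriv]
        exact deriv_h_nonpos hx.1.le hx.2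
    have hcont : Continuous hF := by
      unfold hF
      exact continuous_phiF.add ((continuous_const.mul (continuous_pow 2)))
    have hF1 : hF 1 = 0 := by
      simp [hF, phiF_one]; ring
    have hlim : Filter.Tendsto hF (nhdsWithin 1 (Set.Iio 1)) (nhds 0) := by
      rw [← hF1]
      exact (hcont.tendsto 1).mono_left nhdsWithin_le_nhds
    apply le_of_tendsto hlim
    filter_upwards [Ioo_mem_nhdsLT_of_mem (Set.mem_Ioc.mpr ⟨hu1, le_refl 1⟩)] with v hv
    exact anti (Set.mem_Ico.mpr ⟨by linarith, hu1⟩) (Set.mem_Ico.mpr ⟨by linarith [hv.1], hv.2⟩)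
      (le_of_lt hv.1)

lemma fact_ratio : ∀ (s p : ℕ), s ≤ p →
    (p+s).factorial = (p-s).factorial * ∏ j ∈ Finset.range s, ((p+j+1)*(p-j))
  | 0, p, _ => by simp
  | (n+1), p, h => by
    have hn : n ≤ p := le_trans (Nat.le_succ n) h
    rw [Finset.prod_range_succ]
    rw [show p + (n+1) = (p+n) + 1 from by omega, Nat.factorial_succ, fact_ratio n p hn]
    rw [show p - n = (p - (n+1)) + 1 from by omega, Nat.factorial_succ]
    ring

theorem stmt5 (s p : ℕ) (hs : 1 ≤ s) (hsp : s ≤ p) :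
    ((Nat.factorial (p - s) : ℝ) / (Nat.factorial (p + s) : ℝ))
      ≤ (Real.exp 1 / 2) ^ ((2 * (s : ℝ) ^ 2) / (p : ℝ)) / (p : ℝ) ^ (2 * s) := by
  have hp1 : 1 ≤ p := le_trans hs hsp
  have hp0 : (0:ℝ) < p := by exact_mod_cast hp1
  set L := Real.log 2 with hL
  have hL1 : L < 1 := by rw [hL]; have := Real.log_two_lt_d9; linarith
  set E : ℝ := (2 * (s : ℝ) ^ 2) / (p : ℝ) with hE
  set q : ℝ := (p:ℝ) + 1/2 with hq
  have hq0 : (0:ℝ) < q := by rw [hq]; linarith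
  have hpq : (p:ℝ) ≤ q := by rw [hq]; linarith
  have hsq : (s:ℝ) ≤ (p:ℝ) := by exact_mod_cast hsp
  set W : ℕ → ℝ := fun j => q * phiF ((j:ℝ)/q) + 2*(j:ℝ)*Real.log q with hW
  -- per-term estimate
  have step : ∀ j ∈ Finset.range s, Real.exp (W (j+1) - W j) ≤ (((p+j+1)*(p-j) : ℕ) : ℝ) := by
    intro j hj
    have hjs : j < s := Finset.mem_range.mp hj
    have hjp : j < p := lt_of_lt_of_le hjs hsp
    have hjp' : (j:ℝ) + 1 ≤ (p:ℝ) := by exact_mod_cast hjp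
    have hj0 : (0:ℝ) ≤ (j:ℝ) := Nat.cast_nonneg j
    have hcast : (((p+j+1)*(p-j) : ℕ) : ℝ) = ((p:ℝ)+j+1)*((p:ℝ)-j) := by
      push_cast [Nat.cast_sub hjp.le]; ring
    set m : ℝ := ((j:ℝ)+1/2)/q with hm
    set d : ℝ := (1/2)/q with hd
    have hd0 : 0 ≤ d := by positivity
    have hdm : d ≤ m := by
      rw [hm, hd]
      gcongr
      · linarith
    have hmd : m + d < 1 := by
      rw [hm, hd, ← add_div, div_lt_one hq0]
      rw [hq]
      linarith
    have hkey := phiF_step hd0 hdm hmd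
    have hmd1 : m + d = ((j:ℝ)+1)/q := by rw [hm, hd, ← add_div]; ring_nf
    have hmd2 : m - d = (j:ℝ)/q := by rw [hm, hd, div_sub_div_same]; ring_nf
    have hX0 : (0:ℝ) < ((p:ℝ)+j+1)*((p:ℝ)-j) := by
      apply mul_pos <;> linarith
    have hm2 : 1 - m^2 = (((p:ℝ)+j+1)*((p:ℝ)-j))/q^2 := by
      rw [hm]
      field_simp
      ring
    have hlogm : Real.log (1 - m^2) = Real.log (((p:ℝ)+j+1)*((p:ℝ)-j)) - 2*Real.log q := by
      rw [hm2, Real.log_div (ne_of_gt hX0) (by positivity)]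
      rw [Real.log_pow]
      push_cast
      ring
    rw [hmd1, hmd2, hlogm] at hkey
    -- hkey : phiF ((j+1)/q) - phiF (j/q) ≤ 2*d*(log X - 2 log q)
    have h2d : 2*d = 1/q := by rw [hd]; ring
    rw [h2d] at hkey
    have hq' : q ≠ 0 := ne_of_gt hq0
    have hWd : W (j+1) - W j ≤ Real.log (((p:ℝ)+j+1)*((p:ℝ)-j)) := by
      have hmul := mul_le_mul_of_nonneg_left hkey hq0.le
      rw [mul_sub, show q * (1/q * (Real.log (((p:ℝ)+j+1)*((p:ℝ)-j)) - 2*Real.log q))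
          = Real.log (((p:ℝ)+j+1)*((p:ℝ)-j)) - 2*Real.log q from by field_simp] at hmul
      simp only [hW]
      push_cast
      linarith
    calc Real.exp (W (j+1) - W j) ≤ Real.exp (Real.log (((p:ℝ)+j+1)*((p:ℝ)-j))) :=
          Real.exp_le_exp.mpr hWd
      _ = ((p:ℝ)+j+1)*((p:ℝ)-j) := Real.exp_log hX0
      _ = (((p+j+1)*(p-j) : ℕ) : ℝ) := hcast.symm
  -- product bound
  have hW0 : W 0 = 0 := by simp [hW, phiF_zero]
  have prodb : Real.exp (W s) ≤ ∏ j ∈ Finset.range s, (((p+j+1)*(p-j) : ℕ) : ℝ) := by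
    have hle := Finset.prod_le_prod (fun j _ => (Real.exp_pos (W (j+1) - W j)).le) step
    calc Real.exp (W s) = Real.exp (W s - W 0) := by rw [hW0]; ring_nf
      _ = ∏ j ∈ Finset.range s, Real.exp (W (j+1) - W j) := by
          rw [← Real.exp_sum, Finset.sum_range_sub]
      _ ≤ _ := hle
  -- lower bound for W s
  have hu0 : 0 ≤ (s:ℝ)/q := by positivity
  have hu1 : (s:ℝ)/q < 1 := by rw [div_lt_one hq0, hq]; linarith
  have hphi := hF_nonneg hu0 hu1
  simp only [hF] at hphi
  have hs2q : (s:ℝ)^2/q ≤ (s:ℝ)^2/(p:ℝ) := by gcongr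
  have hlogpq : Real.log (p:ℝ) ≤ Real.log q := Real.log_le_log hp0 hpq
  have hWs : 2*(s:ℝ)*Real.log (p:ℝ) - (1-L)*E ≤ W s := by
    have t1 : -(2*(1-L)*((s:ℝ)^2/q)) ≤ q * phiF ((s:ℝ)/q) := by
      have hmul := mul_le_mul_of_nonneg_left hphi hq0.le
      have expand : q * (phiF ((s:ℝ)/q) + 2*(1-L)*((s:ℝ)/q)^2)
          = q * phiF ((s:ℝ)/q) + 2*(1-L)*((s:ℝ)^2/q) := by
        field_simp
      rw [mul_zero, expand] at hmul
      linarith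
    have t2 : -(2*(1-L)*((s:ℝ)^2/(p:ℝ))) ≤ -(2*(1-L)*((s:ℝ)^2/q)) := by
      have : 2*(1-L)*((s:ℝ)^2/q) ≤ 2*(1-L)*((s:ℝ)^2/(p:ℝ)) :=
        mul_le_mul_of_nonneg_left hs2q (by linarith)
      linarith
    have t3 : 2*(s:ℝ)*Real.log (p:ℝ) ≤ 2*(s:ℝ)*Real.log q := by
      apply mul_le_mul_of_nonneg_left hlogpq
      positivity
    have hEeq : (1-L)*E = 2*(1-L)*((s:ℝ)^2/(p:ℝ)) := by rw [hE]; ring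
    simp only [hW]
    rw [hEeq]
    linarith
  -- final assembly
  have hfub : (0:ℝ) < ((p+s).factorial : ℝ) := by
    exact_mod_cast Nat.factorial_pos (p+s)
  have hppos : (0:ℝ) < (p:ℝ)^(2*s) := by positivity
  rw [div_le_div_iff₀ hfub hppos]
  have hrw : (Real.exp 1 / 2) ^ E = Real.exp ((1-L)*E) := by
    rw [Real.rpow_def_of_pos (by positivity)]
    congr 1
    rw [Real.log_div (Real.exp_ne_zero 1) (by norm_num), Real.log_exp, hL]
  have hppow : ((p:ℝ))^(2*s) = Real.exp (2*(s:ℝ)*Real.log (p:ℝ)) := by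
    have h1 : Real.exp (((2*s : ℕ):ℝ) * Real.log (p:ℝ)) = Real.exp (Real.log (p:ℝ)) ^ (2*s) :=
      Real.exp_nat_mul _ _
    rw [Real.exp_log hp0] at h1
    rw [← h1]
    congr 1
    push_cast
    ring
  have hfe : ((p+s).factorial : ℝ)
      = ((p-s).factorial : ℝ) * ∏ j ∈ Finset.range s, (((p+j+1)*(p-j) : ℕ) : ℝ) := by
    rw [← Nat.cast_prod, ← Nat.cast_mul, ← fact_ratio s p hsp]
  have hfs0 : (0:ℝ) ≤ ((p-s).factorial : ℝ) := by positivity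
  calc ((p-s).factorial : ℝ) * (p:ℝ)^(2*s)
      = ((p-s).factorial : ℝ) * Real.exp (2*(s:ℝ)*Real.log (p:ℝ)) := by rw [hppow]
    _ = ((p-s).factorial : ℝ) * (Real.exp ((1-L)*E) * Real.exp (2*(s:ℝ)*Real.log (p:ℝ) - (1-L)*E)) := by
        rw [← Real.exp_add]
        ring_nf
    _ ≤ ((p-s).factorial : ℝ) * (Real.exp ((1-L)*E) * Real.exp (W s)) := by
        apply mul_le_mul_of_nonneg_left _ hfs0
        apply mul_le_mul_of_nonneg_left _ (Real.exp_pos _).le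
        exact Real.exp_le_exp.mpr hWs
    _ ≤ ((p-s).factorial : ℝ) * (Real.exp ((1-L)*E) * ∏ j ∈ Finset.range s, (((p+j+1)*(p-j) : ℕ) : ℝ)) := by
        apply mul_le_mul_of_nonneg_left _ hfs0
        exact mul_le_mul_of_nonneg_left prodb (Real.exp_pos _).le
    _ = Real.exp ((1-L)*E) * ((p+s).factorial : ℝ) := by rw [hfe]; ring
    _ = (Real.exp 1 / 2) ^ E * ((p+s).factorial : ℝ) := by rw [hrw]
end

section
/- For all real x with 0 < x < 1, the function f(x) := (1−x)^{1/x − 1} · (1+x)^{−1/x − 1} · 4^x · e^{2−2x} satisfies f(x) ≤ 1. -/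
open Real Filter Topology

lemma key_hasSum {x : ℝ} (hx0 : 0 ≤ x) (hx1 : x < 1) :
    HasSum (fun k : ℕ => x ^ (2 * k + 3) / (((k : ℝ) + 1) * (2 * k + 3)))
      (2 * x - ((1 + x) * Real.log (1 + x) - (1 - x) * Real.log (1 - x))) := by
  have habs : |x| < 1 := by rw [abs_of_nonneg hx0]; exact hx1
  have hA := Real.hasSum_log_sub_log_of_abs_lt_one habs
  have hA' : HasSum (fun k : ℕ => (2 : ℝ) * (1 / (2 * ((k : ℝ) + 1) + 1)) * x ^ (2 * (k + 1) + 1))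
      ((Real.log (1 + x) - Real.log (1 - x)) -
        ∑ i ∈ Finset.range 1, (2 : ℝ) * (1 / (2 * (i : ℝ) + 1)) * x ^ (2 * i + 1)) := by
    have := (hasSum_nat_add_iff' (f := fun k : ℕ =>
      (2 : ℝ) * (1 / (2 * (k : ℝ) + 1)) * x ^ (2 * k + 1)) 1).2 hA
    convert this using 2 with k
    rfl
    push_cast
    ring
  have hx2 : |x ^ 2| < 1 := by
    rw [abs_of_nonneg (sq_nonneg x)]
    nlinarith
  have hB := (Real.hasSum_pow_div_log_of_abs_lt_one hx2).mul_left x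
  have hsub := hB.sub hA'
  have hterm : (fun k : ℕ => x * ((x ^ 2) ^ (k + 1) / ((k : ℝ) + 1)) -
      (2 : ℝ) * (1 / (2 * ((k : ℝ) + 1) + 1)) * x ^ (2 * (k + 1) + 1))
      = fun k : ℕ => x ^ (2 * k + 3) / (((k : ℝ) + 1) * (2 * k + 3)) := by
    funext k
    have h1 : ((k : ℝ) + 1) ≠ 0 := by positivity
    have h2 : (2 * ((k : ℝ) + 1) + 1) ≠ 0 := by positivity
    field_simp
    ring
  rw [hterm] at hsub
  have hsum : x * -Real.log (1 - x ^ 2) -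
      ((Real.log (1 + x) - Real.log (1 - x)) -
        ∑ i ∈ Finset.range 1, (2 : ℝ) * (1 / (2 * (i : ℝ) + 1)) * x ^ (2 * i + 1))
      = 2 * x - ((1 + x) * Real.log (1 + x) - (1 - x) * Real.log (1 - x)) := by
    have h1x : (0 : ℝ) < 1 - x := by linarith
    have h1x' : (0 : ℝ) < 1 + x := by linarith
    have hlog : Real.log (1 - x ^ 2) = Real.log (1 - x) + Real.log (1 + x) := by
      rw [show (1 : ℝ) - x ^ 2 = (1 - x) * (1 + x) by ring,
        Real.log_mul (ne_of_gt h1x) (ne_of_gt h1x')]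
    rw [hlog]
    norm_num [Finset.sum_range_one]
    ring
  rw [hsum] at hsub
  exact hsub

lemma bound {x : ℝ} (hx0 : 0 ≤ x) (hx1 : x < 1) :
    2 * x - ((1 + x) * Real.log (1 + x) - (1 - x) * Real.log (1 - x))
      ≤ (2 - 2 * Real.log 2) * x ^ 2 := by
  set G : ℝ → ℝ := fun y =>
    2 * y - ((1 + y) * Real.log (1 + y) - (1 - y) * Real.log (1 - y)) with hG
  -- step 1: for x ≤ y < 1, y^2 * G x ≤ x^2 * G y
  have step : ∀ y : ℝ, x ≤ y → y < 1 → y ^ 2 * G x ≤ x ^ 2 * G y := by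
    intro y hxy hy1
    have hy0 : 0 ≤ y := le_trans hx0 hxy
    have h1 := (key_hasSum hx0 hx1).mul_left (y ^ 2)
    have h2 := (key_hasSum hy0 hy1).mul_left (x ^ 2)
    refine hasSum_le (fun k => ?_) h1 h2
    have hd : (0 : ℝ) < ((k : ℝ) + 1) * (2 * k + 3) := by positivity
    rw [mul_div_assoc', mul_div_assoc', div_le_div_iff₀ hd hd]
    have hpow : x ^ (2 * k + 1) ≤ y ^ (2 * k + 1) := pow_le_pow_left₀ hx0 hxy _
    calc y ^ 2 * x ^ (2 * k + 3) * (((k : ℝ) + 1) * (2 * k + 3))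
        = (x * y) ^ 2 * x ^ (2 * k + 1) * (((k : ℝ) + 1) * (2 * k + 3)) := by ring
      _ ≤ (x * y) ^ 2 * y ^ (2 * k + 1) * (((k : ℝ) + 1) * (2 * k + 3)) :=
          mul_le_mul_of_nonneg_right
            (mul_le_mul_of_nonneg_left hpow (sq_nonneg _)) hd.le
      _ = x ^ 2 * y ^ (2 * k + 3) * (((k : ℝ) + 1) * (2 * k + 3)) := by ring
  -- step 2: take y → 1⁻
  have hev : ∀ᶠ y in 𝓝[<] (1 : ℝ), y ^ 2 * G x ≤ x ^ 2 * G y := by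
    filter_upwards [eventually_nhdsWithin_of_eventually_nhds (eventually_gt_nhds hx1),
      self_mem_nhdsWithin] with y hy1 hy2
    exact step y (le_of_lt hy1) hy2
  have hc1 : Tendsto (fun y : ℝ => y ^ 2 * G x) (𝓝[<] (1 : ℝ)) (𝓝 (G x)) := by
    have : Tendsto (fun y : ℝ => y ^ 2 * G x) (𝓝 (1 : ℝ)) (𝓝 (1 ^ 2 * G x)) := by
      exact (continuous_pow 2).tendsto 1 |>.mul_const _
    simpa using this.mono_left nhdsWithin_le_nhds
  have hc2 : Tendsto (fun y : ℝ => x ^ 2 * G y) (𝓝[<] (1 : ℝ)) (𝓝 ((2 - 2 * Real.log 2) * x ^ 2)) := by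
    have hcont : Continuous G := by
      have c1 : Continuous fun y : ℝ => (1 + y) * Real.log (1 + y) :=
        Real.continuous_mul_log.comp (continuous_const.add continuous_id)
      have c2 : Continuous fun y : ℝ => (1 - y) * Real.log (1 - y) :=
        Real.continuous_mul_log.comp (continuous_const.sub continuous_id)
      exact (continuous_const.mul continuous_id).sub (c1.sub c2)
    have : Tendsto (fun y : ℝ => x ^ 2 * G y) (𝓝 (1 : ℝ)) (𝓝 (x ^ 2 * G 1)) :=
      (continuous_const.mul hcont).tendsto 1
    have hG1 : G 1 = 2 - 2 * Real.log 2 := by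
      norm_num [hG]
    rw [hG1] at this
    simpa [mul_comm] using this.mono_left nhdsWithin_le_nhds
  exact le_of_tendsto_of_tendsto hc1 hc2 hev

theorem stmt6 (x : ℝ) (h0 : 0 < x) (h1 : x < 1) :
    (1 - x) ^ (1 / x - 1) * (1 + x) ^ (-(1 / x) - 1) * (4 : ℝ) ^ x
      * Real.exp (2 - 2 * x) ≤ 1 := by
  have h1x : (0 : ℝ) < 1 - x := by linarith
  have h1x' : (0 : ℝ) < 1 + x := by linarith
  rw [Real.rpow_def_of_pos h1x, Real.rpow_def_of_pos h1x',
    Real.rpow_def_of_pos (by norm_num : (0:ℝ) < 4), ← Real.exp_add, ← Real.exp_add,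
    ← Real.exp_add]
  rw [Real.exp_le_one_iff]
  -- multiply by x
  have hb := bound (le_of_lt h0) h1
  have hlog4 : Real.log 4 = 2 * Real.log 2 := by
    rw [show (4 : ℝ) = 2 ^ 2 by norm_num, Real.log_pow]
    push_cast; ring
  rw [hlog4]
  have hx : 0 ≤ (Real.log (1 - x) * (1 / x - 1) + Real.log (1 + x) * (-(1 / x) - 1) +
      Real.log 2 * 2 * x + (2 - 2 * x)) * (-x) := by
    have hdist : (Real.log (1 - x) * (1 / x - 1) + Real.log (1 + x) * (-(1 / x) - 1) +
        Real.log 2 * 2 * x + (2 - 2 * x)) * x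
        = 2 * x - ((1 + x) * Real.log (1 + x) - (1 - x) * Real.log (1 - x))
          - (2 - 2 * Real.log 2) * x ^ 2 := by
      field_simp
      ring
    nlinarith [hb]
  nlinarith [hx]
end

section
/- Let Ω=(x_L,x_R), T>0, Q=Ω×(0,T), and let ε, μ : [x_L,x_R] → ℝ be continuous with ε ≥ ε_* > 0, μ ≥ μ_* > 0; set c(x) := (ε(x)μ(x))^{−1/2} and c_∞ := sup_{x∈Ω} c(x). Let φ, ψ be continuous on the closure of Q, and let (v_E, v_H) be continuously differentiable on the closure of Q and satisfy ∂v_E/∂x + μ ∂v_H/∂t = φ and ∂v_H/∂x + ε ∂v_E/∂t = ψ in Q, with zero initial data v_E(·,0)=v_H(·,0)=0 on Ω and zero Dirichlet boundary data v_E(x_L,·)=v_E(x_R,·)=0 on (0,T). Then for every t∈[0,T], ∫_0^t ∫_{x_L}^{x_R} ( ε v_E² + μ v_H² ) dx ds ≤ t² c_∞² ∫_0^t ∫_{x_L}^{x_R} ( ε φ² + μ ψ² ) dx ds. -/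
open MeasureTheory Set

/-- Cauchy-Schwarz in ℝ². -/
lemma aux_l2cs (a b c d : ℝ) : a*c + b*d ≤ Real.sqrt (a^2+b^2) * Real.sqrt (c^2+d^2) := by
  rw [← Real.sqrt_mul (by positivity)]
  calc a*c + b*d ≤ |a*c + b*d| := le_abs_self _
    _ = Real.sqrt ((a*c+b*d)^2) := (Real.sqrt_sq_eq_abs _).symm
    _ ≤ Real.sqrt ((a^2+b^2)*(c^2+d^2)) := by
        apply Real.sqrt_le_sqrt; nlinarith [sq_nonneg (a*d - b*c)]

/-- Cauchy-Schwarz for interval integrals of continuous nonnegative functions. -/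
lemma aux_intcs {a b : ℝ} (hab : a ≤ b) {f g : ℝ → ℝ} (hf : Continuous f) (hg : Continuous g)
    (hf0 : ∀ x, 0 ≤ f x) (hg0 : ∀ x, 0 ≤ g x) :
    ∫ x in a..b, f x * g x ≤
      Real.sqrt (∫ x in a..b, f x ^ 2) * Real.sqrt (∫ x in a..b, g x ^ 2) := by
  haveI : Fact (volume (Set.Ioc a b) < ⊤) := ⟨measure_Ioc_lt_top⟩
  obtain ⟨Cf, hCf⟩ := (isCompact_Icc (a := a) (b := b)).exists_bound_of_continuousOn
    hf.continuousOn
  obtain ⟨Cg, hCg⟩ := (isCompact_Icc (a := a) (b := b)).exists_bound_of_continuousOn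
    hg.continuousOn
  have hpq : Real.HolderConjugate 2 2 := Real.HolderConjugate.two_two
  have memf : MemLp f (ENNReal.ofReal 2) (volume.restrict (Ioc a b)) := by
    apply MemLp.of_bound (hf.aestronglyMeasurable.restrict) Cf
    filter_upwards [ae_restrict_mem measurableSet_Ioc] with x hx
    exact hCf x (Ioc_subset_Icc_self hx)
  have memg : MemLp g (ENNReal.ofReal 2) (volume.restrict (Ioc a b)) := by
    apply MemLp.of_bound (hg.aestronglyMeasurable.restrict) Cg
    filter_upwards [ae_restrict_mem measurableSet_Ioc] with x hx
    exact hCg x (Ioc_subset_Icc_self hx)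
  have h := MeasureTheory.integral_mul_le_Lp_mul_Lq_of_nonneg hpq
    (Filter.Eventually.of_forall hf0) (Filter.Eventually.of_forall hg0) memf memg
  rw [intervalIntegral.integral_of_le hab, intervalIntegral.integral_of_le hab,
    intervalIntegral.integral_of_le hab]
  calc ∫ x in Ioc a b, f x * g x ≤
      (∫ x in Ioc a b, f x ^ (2:ℝ)) ^ ((1:ℝ)/2) * (∫ x in Ioc a b, g x ^ (2:ℝ)) ^ ((1:ℝ)/2) := h
    _ = _ := by
        have h2 : ∀ u:ℝ, u ^ (2:ℝ) = u^2 := fun u => by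
          rw [show (2:ℝ) = ((2:ℕ):ℝ) by norm_num, Real.rpow_natCast]
        simp only [h2, Real.sqrt_eq_rpow]

/-- The sqrt-Gronwall lemma with δ-trick. -/
lemma aux_gronwall {I D : ℝ → ℝ} {K t : ℝ} (ht : 0 ≤ t) (hK : 0 ≤ K)
    (hI0 : I 0 = 0) (hInn : ∀ s ∈ Set.Icc 0 t, 0 ≤ I s)
    (hd : ∀ s ∈ Set.Icc 0 t, HasDerivAt I (D s) s)
    (hD : ∀ s ∈ Set.Icc 0 t, D s ≤ 2*K*Real.sqrt (I s)) :
    I t ≤ K^2 * t^2 := by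
  have key : ∀ δ : ℝ, 0 < δ → I t ≤ K^2*t^2 + 2*K*t*Real.sqrt δ := by
    intro δ hδ
    -- first, I is nonneg-shifted : note √(I s) ≤ √(I s + δ)
    set h : ℝ → ℝ := fun s => Real.sqrt (I s + δ) - K*s with hh
    have hIcont : ContinuousOn I (Icc 0 t) := fun s hs => ((hd s hs).continuousAt).continuousWithinAt
    have hcont : ContinuousOn h (Icc 0 t) := by
      apply ContinuousOn.sub
      · exact (Real.continuous_sqrt.comp_continuousOn (hIcont.add continuousOn_const))
      · exact (continuous_const.mul continuous_id).continuousOn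
    have hderiv : ∀ s ∈ interior (Icc (0:ℝ) t), HasDerivAt h (D s / (2*Real.sqrt (I s + δ)) - K) s := by
      intro s hs
      rw [interior_Icc] at hs
      have h1 : HasDerivAt (fun s => I s + δ) (D s) s := ((hd s (Ioo_subset_Icc_self hs)).add_const δ)
      have hIs : 0 ≤ I s := hInn s (Ioo_subset_Icc_self hs)
      have hpos : (0:ℝ) < I s + δ := by linarith
      have h2 := (h1.sqrt (ne_of_gt hpos)).sub ((hasDerivAt_id s).const_mul K)
      exact h2.congr_deriv (by simp)
    have hanti : AntitoneOn h (Icc 0 t) :=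
      antitoneOn_of_deriv_nonpos (convex_Icc 0 t) hcont
        (fun s hs => ((hderiv s hs).differentiableAt).differentiableWithinAt)
        (by
          intro s hs
          rw [(hderiv s hs).deriv]
          have hs' := hs; rw [interior_Icc] at hs'
          have hIs : 0 ≤ I s := hInn s (Ioo_subset_Icc_self hs')
          have hpos : (0:ℝ) < Real.sqrt (I s + δ) := Real.sqrt_pos.2 (by linarith)
          have hb : D s ≤ 2*K*Real.sqrt (I s + δ) := by
            refine le_trans (hD s (Ioo_subset_Icc_self hs')) ?_
            have := Real.sqrt_le_sqrt (show I s ≤ I s + δ by linarith)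
            nlinarith [Real.sqrt_nonneg (I s)]
          rw [sub_nonpos, div_le_iff₀ (by positivity)]
          nlinarith
        )
    have hht : h t ≤ h 0 := hanti (left_mem_Icc.2 ht) (right_mem_Icc.2 ht) ht
    have h0 : h 0 = Real.sqrt δ := by simp [hh, hI0]
    have hsq : Real.sqrt (I t + δ) ≤ K*t + Real.sqrt δ := by
      have := hht; rw [h0] at this; simp only [hh] at this; linarith
    have hnn : 0 ≤ K*t + Real.sqrt δ := by positivity
    have hE := Real.sq_sqrt (show 0 ≤ I t + δ by have := hInn t (right_mem_Icc.2 ht); linarith)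
    nlinarith [pow_le_pow_left₀ (Real.sqrt_nonneg (I t + δ)) hsq 2, Real.sq_sqrt hδ.le,
      Real.sqrt_nonneg δ]
  -- now let δ → 0
  refine le_of_forall_pos_le_add ?_
  intro η hη
  have hδ : (0:ℝ) < (η/(2*K*t+1))^2 := by positivity
  have h1 := key _ hδ
  have h2 : Real.sqrt ((η/(2*K*t+1))^2) = η/(2*K*t+1) := Real.sqrt_sq (by positivity)
  rw [h2] at h1
  have h3 : 2*K*t*(η/(2*K*t+1)) ≤ η := by
    have hx : 2*K*t/(2*K*t+1) ≤ 1 := by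
      rw [div_le_one (by positivity)]; linarith
    calc 2*K*t*(η/(2*K*t+1)) = η * (2*K*t/(2*K*t+1)) := by ring
      _ ≤ η * 1 := mul_le_mul_of_nonneg_left hx hη.le
      _ = η := mul_one η
  linarith

theorem stmt10
    (xL xR T εstar μstar : ℝ) (hx : xL < xR) (hT : 0 < T)
    (ε μ : ℝ → ℝ)
    (hεcont : ContinuousOn ε (Set.Icc xL xR)) (hμcont : ContinuousOn μ (Set.Icc xL xR))
    (hεstar : 0 < εstar) (hμstar : 0 < μstar)
    (hε : ∀ x ∈ Set.Icc xL xR, εstar ≤ ε x) (hμ : ∀ x ∈ Set.Icc xL xR, μstar ≤ μ x)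
    (φ ψ vE vH : ℝ → ℝ → ℝ)
    (hφ : ContinuousOn (fun p : ℝ × ℝ => φ p.1 p.2) (Set.Icc xL xR ×ˢ Set.Icc 0 T))
    (hψ : ContinuousOn (fun p : ℝ × ℝ => ψ p.1 p.2) (Set.Icc xL xR ×ˢ Set.Icc 0 T))
    (hvE : ContDiffOn ℝ 1 (fun p : ℝ × ℝ => vE p.1 p.2) (Set.Icc xL xR ×ˢ Set.Icc 0 T))
    (hvH : ContDiffOn ℝ 1 (fun p : ℝ × ℝ => vH p.1 p.2) (Set.Icc xL xR ×ˢ Set.Icc 0 T))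
    (hPDE1 : ∀ x ∈ Set.Ioo xL xR, ∀ t ∈ Set.Ioo 0 T,
      pdX vE x t + μ x * pdT vH x t = φ x t)
    (hPDE2 : ∀ x ∈ Set.Ioo xL xR, ∀ t ∈ Set.Ioo 0 T,
      pdX vH x t + ε x * pdT vE x t = ψ x t)
    (hIC : ∀ x ∈ Set.Icc xL xR, vE x 0 = 0 ∧ vH x 0 = 0)
    (hBC : ∀ t ∈ Set.Icc (0 : ℝ) T, vE xL t = 0 ∧ vE xR t = 0)
    (cinf : ℝ)
    (hcinf : cinf = sSup ((fun x => (Real.sqrt (ε x * μ x))⁻¹) '' Set.Ioo xL xR)) :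
    ∀ t ∈ Set.Icc (0 : ℝ) T,
      (∫ s in (0 : ℝ)..t, ∫ x in xL..xR, (ε x * (vE x s) ^ 2 + μ x * (vH x s) ^ 2))
        ≤ t ^ 2 * cinf ^ 2 *
          ∫ s in (0 : ℝ)..t, ∫ x in xL..xR, (ε x * (φ x s) ^ 2 + μ x * (ψ x s) ^ 2) := by
  intro t ht
  obtain ⟨ht0, htT⟩ := ht
  have hxle : xL ≤ xR := hx.le
  have hTle : (0:ℝ) ≤ T := hT.le
  -- clamping maps
  set cx : ℝ → ℝ := fun x => max xL (min x xR) with hcxdef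
  set ct : ℝ → ℝ := fun s => max 0 (min s T) with hctdef
  have hcx_mem : ∀ x, cx x ∈ Icc xL xR :=
    fun x => ⟨le_max_left _ _, max_le hxle (min_le_right _ _)⟩
  have hct_mem : ∀ s, ct s ∈ Icc (0:ℝ) T :=
    fun s => ⟨le_max_left _ _, max_le hTle (min_le_right _ _)⟩
  have hcx_id : ∀ x ∈ Icc xL xR, cx x = x := by
    intro x hx'; simp only [hcxdef]; rw [min_eq_left hx'.2, max_eq_right hx'.1]
  have hct_id : ∀ s ∈ Icc (0:ℝ) T, ct s = s := by
    intro s hs'; simp only [hctdef]; rw [min_eq_left hs'.2, max_eq_right hs'.1]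
  have hccx : Continuous cx := continuous_const.max (continuous_id.min continuous_const)
  have hcct : Continuous ct := continuous_const.max (continuous_id.min continuous_const)
  set Q : Set (ℝ × ℝ) := Icc xL xR ×ˢ Icc (0:ℝ) T with hQdef
  have hcmap : Continuous (fun p : ℝ × ℝ => ((cx p.1, ct p.2) : ℝ × ℝ)) :=
    (hccx.comp continuous_fst).prodMk (hcct.comp continuous_snd)
  have hmapQ : ∀ p : ℝ × ℝ, ((cx p.1, ct p.2) : ℝ × ℝ) ∈ Q :=
    fun p => ⟨hcx_mem p.1, hct_mem p.2⟩
  -- clamped continuous versions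
  have hvEb : Continuous (fun p : ℝ × ℝ => vE (cx p.1) (ct p.2)) :=
    (hvE.continuousOn).comp_continuous hcmap hmapQ
  have hvHb : Continuous (fun p : ℝ × ℝ => vH (cx p.1) (ct p.2)) :=
    (hvH.continuousOn).comp_continuous hcmap hmapQ
  have hφb : Continuous (fun p : ℝ × ℝ => φ (cx p.1) (ct p.2)) :=
    hφ.comp_continuous hcmap hmapQ
  have hψb : Continuous (fun p : ℝ × ℝ => ψ (cx p.1) (ct p.2)) :=
    hψ.comp_continuous hcmap hmapQ
  have hεb : Continuous (fun x => ε (cx x)) := hεcont.comp_continuous hccx hcx_mem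
  have hμb : Continuous (fun x => μ (cx x)) := hμcont.comp_continuous hccx hcx_mem
  have hεpos : ∀ y ∈ Icc xL xR, 0 < ε y := fun y hy => lt_of_lt_of_le hεstar (hε y hy)
  have hμpos : ∀ y ∈ Icc xL xR, 0 < μ y := fun y hy => lt_of_lt_of_le hμstar (hμ y hy)
  have hεbpos : ∀ x, 0 < ε (cx x) := fun x => hεpos _ (hcx_mem x)
  have hμbpos : ∀ x, 0 < μ (cx x) := fun x => hμpos _ (hcx_mem x)
  -- the main integrands (clamped)
  set P : ℝ → ℝ → ℝ :=
    fun s x => ε (cx x) * vE (cx x) (ct s) ^ 2 + μ (cx x) * vH (cx x) (ct s) ^ 2 with hPdef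
  set Fb : ℝ → ℝ → ℝ :=
    fun s x => ε (cx x) * φ (cx x) (ct s) ^ 2 + μ (cx x) * ψ (cx x) (ct s) ^ 2 with hFbdef
  set Db : ℝ → ℝ → ℝ :=
    fun s x => 2 * (vE (cx x) (ct s) * ψ (cx x) (ct s) + vH (cx x) (ct s) * φ (cx x) (ct s))
    with hDbdef
  set Ef : ℝ → ℝ := fun s => ∫ x in xL..xR, P s x with hEfdef
  set Ff : ℝ → ℝ := fun s => ∫ x in xL..xR, Fb s x with hFfdef
  set Df : ℝ → ℝ := fun s => ∫ x in xL..xR, Db s x with hDfdef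
  set If : ℝ → ℝ := fun r => ∫ s in (0:ℝ)..r, Ef s with hIfdef
  have hswap : Continuous (fun q : ℝ × ℝ => ((q.2, q.1) : ℝ × ℝ)) :=
    continuous_snd.prodMk continuous_fst
  have hPc : Continuous (Function.uncurry P) := by
    exact ((hεb.comp continuous_snd).mul ((hvEb.comp hswap).pow 2)).add
      ((hμb.comp continuous_snd).mul ((hvHb.comp hswap).pow 2))
  have hFbc : Continuous (Function.uncurry Fb) := by
    exact ((hεb.comp continuous_snd).mul ((hφb.comp hswap).pow 2)).add
      ((hμb.comp continuous_snd).mul ((hψb.comp hswap).pow 2))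
  have hDbc : Continuous (Function.uncurry Db) := by
    exact continuous_const.mul (((hvEb.comp hswap).mul (hψb.comp hswap)).add
      ((hvHb.comp hswap).mul (hφb.comp hswap)))
  have hEfc : Continuous Ef :=
    intervalIntegral.continuous_parametric_intervalIntegral_of_continuous' hPc xL xR
  have hFfc : Continuous Ff :=
    intervalIntegral.continuous_parametric_intervalIntegral_of_continuous' hFbc xL xR
  have hDfc : Continuous Df :=
    intervalIntegral.continuous_parametric_intervalIntegral_of_continuous' hDbc xL xR
  have hPnn : ∀ s x, 0 ≤ P s x := fun s x =>
    add_nonneg (mul_nonneg (hεbpos x).le (sq_nonneg _)) (mul_nonneg (hμbpos x).le (sq_nonneg _))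
  have hFbnn : ∀ s x, 0 ≤ Fb s x := fun s x =>
    add_nonneg (mul_nonneg (hεbpos x).le (sq_nonneg _)) (mul_nonneg (hμbpos x).le (sq_nonneg _))
  have hEnn : ∀ s, 0 ≤ Ef s := fun s =>
    intervalIntegral.integral_nonneg hxle (fun x _ => hPnn s x)
  have hFnn : ∀ s, 0 ≤ Ff s := fun s =>
    intervalIntegral.integral_nonneg hxle (fun x _ => hFbnn s x)
  have hct0 : ct 0 = 0 := by simp only [hctdef]; rw [min_eq_left hTle, max_self]
  have hE0 : Ef 0 = 0 := by
    have hz : ∀ x, P 0 x = 0 := by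
      intro x
      have h0 := hIC (cx x) (hcx_mem x)
      simp [hPdef, hct0, h0.1, h0.2]
    simp only [hEfdef]
    rw [show (fun x => P 0 x) = fun _ => (0:ℝ) from funext hz]
    simp
  -- cinf facts
  have hqpos : ∀ y ∈ Icc xL xR, 0 < ε y * μ y := fun y hy => mul_pos (hεpos y hy) (hμpos y hy)
  have hqcont : ContinuousOn (fun y => (Real.sqrt (ε y * μ y))⁻¹) (Icc xL xR) :=
    (Real.continuous_sqrt.comp_continuousOn (hεcont.mul hμcont)).inv₀
      (fun y hy => ne_of_gt (Real.sqrt_pos.2 (hqpos y hy)))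
  have hbdd : BddAbove ((fun x => (Real.sqrt (ε x * μ x))⁻¹) '' Ioo xL xR) := by
    refine ⟨(Real.sqrt (εstar * μstar))⁻¹, ?_⟩
    rintro z ⟨y, hy, rfl⟩
    have hy' : y ∈ Icc xL xR := Ioo_subset_Icc_self hy
    have h1 : Real.sqrt (εstar * μstar) ≤ Real.sqrt (ε y * μ y) :=
      Real.sqrt_le_sqrt (by nlinarith [hε y hy', hμ y hy'])
    exact inv_anti₀ (Real.sqrt_pos.2 (mul_pos hεstar hμstar)) h1
  have hcle : ∀ y ∈ Icc xL xR, (Real.sqrt (ε y * μ y))⁻¹ ≤ cinf := by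
    intro y hy
    have hyc : y ∈ closure (Ioo xL xR) := by
      rw [closure_Ioo hx.ne]; exact hy
    have hnb : (nhdsWithin y (Ioo xL xR)).NeBot := mem_closure_iff_nhdsWithin_neBot.1 hyc
    have htd : Filter.Tendsto (fun z => (Real.sqrt (ε z * μ z))⁻¹) (nhdsWithin y (Ioo xL xR))
        (nhds ((Real.sqrt (ε y * μ y))⁻¹)) :=
      ((hqcont y hy).mono Ioo_subset_Icc_self).tendsto
    refine le_of_tendsto htd ?_
    filter_upwards [self_mem_nhdsWithin] with z hz
    rw [hcinf]
    exact le_csSup hbdd ⟨z, hz, rfl⟩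
  have hcpos : 0 < cinf :=
    lt_of_lt_of_le (inv_pos.2 (Real.sqrt_pos.2 (hqpos xL (left_mem_Icc.2 hxle))))
      (hcle xL (left_mem_Icc.2 hxle))
  have hc2 : ∀ y ∈ Icc xL xR, (ε y * μ y)⁻¹ ≤ cinf ^ 2 := by
    intro y hy
    have h1 : ((Real.sqrt (ε y * μ y))⁻¹) ^ 2 = (ε y * μ y)⁻¹ := by
      rw [inv_pow, Real.sq_sqrt (hqpos y hy).le]
    rw [← h1]
    exact pow_le_pow_left₀ (inv_nonneg.2 (Real.sqrt_nonneg _)) (hcle y hy) 2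
  -- fderiv machinery
  have hUD : UniqueDiffOn ℝ Q := (uniqueDiffOn_Icc hx).prod (uniqueDiffOn_Icc hT)
  set LE : ℝ × ℝ → (ℝ × ℝ) →L[ℝ] ℝ := fderivWithin ℝ (fun p : ℝ × ℝ => vE p.1 p.2) Q with hLEdef
  set LH : ℝ × ℝ → (ℝ × ℝ) →L[ℝ] ℝ := fderivWithin ℝ (fun p : ℝ × ℝ => vH p.1 p.2) Q with hLHdef
  have hLEapp : ContinuousOn (fun p : ℝ × ℝ => (LE p) ((0:ℝ),(1:ℝ))) Q := by
    have h := hvE.continuousOn_fderivWithin_apply hUD le_rfl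
    exact h.comp (continuousOn_id.prodMk continuousOn_const)
      (fun p hp => ⟨hp, mem_univ _⟩)
  have hLHapp : ContinuousOn (fun p : ℝ × ℝ => (LH p) ((0:ℝ),(1:ℝ))) Q := by
    have h := hvH.continuousOn_fderivWithin_apply hUD le_rfl
    exact h.comp (continuousOn_id.prodMk continuousOn_const)
      (fun p hp => ⟨hp, mem_univ _⟩)
  -- key derivative facts
  have keyT : ∀ (v : ℝ → ℝ → ℝ), ContDiffOn ℝ 1 (fun p : ℝ × ℝ => v p.1 p.2) Q →
      ∀ x ∈ Icc xL xR, ∀ s ∈ Ioo (0:ℝ) T,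
      HasDerivAt (fun u => v x u)
        ((fderivWithin ℝ (fun p : ℝ × ℝ => v p.1 p.2) Q (x, s)) ((0:ℝ),(1:ℝ))) s := by
    intro v hv x hxm s hs
    have hdw : HasFDerivWithinAt (fun p : ℝ × ℝ => v p.1 p.2)
        (fderivWithin ℝ (fun p : ℝ × ℝ => v p.1 p.2) Q (x, s)) Q (x, s) :=
      ((hv.differentiableOn one_ne_zero) (x, s) ⟨hxm, Ioo_subset_Icc_self hs⟩).hasFDerivWithinAt
    have hline : HasDerivWithinAt (fun u : ℝ => ((x, u) : ℝ × ℝ)) (((0:ℝ),(1:ℝ)))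
        (Icc (0:ℝ) T) s :=
      ((hasDerivAt_const s x).prodMk (hasDerivAt_id s)).hasDerivWithinAt
    have hmaps : MapsTo (fun u : ℝ => ((x, u) : ℝ × ℝ)) (Icc (0:ℝ) T) Q :=
      fun u hu => ⟨hxm, hu⟩
    have hcomp := hdw.comp_hasDerivWithinAt s hline hmaps
    exact hcomp.hasDerivAt (Icc_mem_nhds hs.1 hs.2)
  have keyX : ∀ (v : ℝ → ℝ → ℝ), ContDiffOn ℝ 1 (fun p : ℝ × ℝ => v p.1 p.2) Q →
      ∀ x ∈ Ioo xL xR, ∀ s ∈ Icc (0:ℝ) T,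
      HasDerivAt (fun y => v y s)
        ((fderivWithin ℝ (fun p : ℝ × ℝ => v p.1 p.2) Q (x, s)) ((1:ℝ),(0:ℝ))) x := by
    intro v hv x hxm s hs
    have hdw : HasFDerivWithinAt (fun p : ℝ × ℝ => v p.1 p.2)
        (fderivWithin ℝ (fun p : ℝ × ℝ => v p.1 p.2) Q (x, s)) Q (x, s) :=
      ((hv.differentiableOn one_ne_zero) (x, s) ⟨Ioo_subset_Icc_self hxm, hs⟩).hasFDerivWithinAt
    have hline : HasDerivWithinAt (fun y : ℝ => ((y, s) : ℝ × ℝ)) (((1:ℝ),(0:ℝ)))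
        (Icc xL xR) x :=
      ((hasDerivAt_id x).prodMk (hasDerivAt_const x s)).hasDerivWithinAt
    have hmaps : MapsTo (fun y : ℝ => ((y, s) : ℝ × ℝ)) (Icc xL xR) Q :=
      fun y hy => ⟨hy, hs⟩
    have hcomp := hdw.comp_hasDerivWithinAt x hline hmaps
    exact hcomp.hasDerivAt (Icc_mem_nhds hxm.1 hxm.2)
  have hLEw : ∀ w : ℝ × ℝ, ContinuousOn (fun p : ℝ × ℝ => (LE p) w) Q := by
    intro w
    have h := hvE.continuousOn_fderivWithin_apply hUD le_rfl
    exact h.comp (continuousOn_id.prodMk continuousOn_const) (fun p hp => ⟨hp, mem_univ _⟩)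
  have hLHw : ∀ w : ℝ × ℝ, ContinuousOn (fun p : ℝ × ℝ => (LH p) w) Q := by
    intro w
    have h := hvH.continuousOn_fderivWithin_apply hUD le_rfl
    exact h.comp (continuousOn_id.prodMk continuousOn_const) (fun p hp => ⟨hp, mem_univ _⟩)
  have hIoc : Set.uIoc xL xR = Ioc xL xR := uIoc_of_le hxle
  have hxRnull : ∀ᵐ x : ℝ ∂volume, x ≠ xR := by
    have hset : {a : ℝ | ¬ a ≠ xR} = {xR} := by ext z; simp
    rw [MeasureTheory.ae_iff, hset]
    exact measure_singleton xR
  -- slices are continuous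
  have hsliceE : ∀ s ∈ Icc (0:ℝ) T, ContinuousOn (fun x => vE x s) (Icc xL xR) := by
    intro s hs
    exact hvE.continuousOn.comp (continuous_id.prodMk continuous_const).continuousOn
      (fun x hx' => ⟨hx', hs⟩)
  have hsliceH : ∀ s ∈ Icc (0:ℝ) T, ContinuousOn (fun x => vH x s) (Icc xL xR) := by
    intro s hs
    exact hvH.continuousOn.comp (continuous_id.prodMk continuous_const).continuousOn
      (fun x hx' => ⟨hx', hs⟩)
  -- the derivative of Ef
  have hEfD : ∀ s₀ ∈ Ioo (0:ℝ) T, HasDerivAt Ef (Df s₀) s₀ := by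
    intro s₀ hs₀
    have hs₀Icc : s₀ ∈ Icc (0:ℝ) T := Ioo_subset_Icc_self hs₀
    set δ₁ : ℝ := min s₀ (T - s₀) / 2 with hδ₁def
    have hδ₁pos : 0 < δ₁ := by
      have := hs₀.1; have := hs₀.2
      apply div_pos (lt_min (by linarith) (by linarith)) (by norm_num)
    have hδ₁lt1 : δ₁ < s₀ := by
      have h1 : min s₀ (T - s₀) ≤ s₀ := min_le_left _ _
      have := hs₀.1; linarith
    have hδ₁lt2 : δ₁ < T - s₀ := by
      have h1 : min s₀ (T - s₀) ≤ T - s₀ := min_le_right _ _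
      have : 0 < T - s₀ := by have := hs₀.2; linarith
      linarith
    have hsub2 : Icc (s₀ - δ₁) (s₀ + δ₁) ⊆ Ioo (0:ℝ) T := by
      intro z hz
      exact ⟨by have := hz.1; linarith, by have := hz.2; linarith⟩
    have hball : Metric.ball s₀ δ₁ ⊆ Ioo (0:ℝ) T := by
      rw [Real.ball_eq_Ioo]
      exact (Ioo_subset_Icc_self).trans hsub2
    set F' : ℝ → ℝ → ℝ := fun s x =>
      2 * (ε x * vE x s * (LE (x, s) ((0:ℝ),(1:ℝ))) + μ x * vH x s * (LH (x, s) ((0:ℝ),(1:ℝ))))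
      with hF'def
    have hWc : ContinuousOn (fun p : ℝ × ℝ => F' p.2 p.1) Q := by
      apply ContinuousOn.mul continuousOn_const
      apply ContinuousOn.add
      · exact ((hεcont.comp continuous_fst.continuousOn (fun p hp => hp.1)).mul
          hvE.continuousOn).mul (hLEw ((0:ℝ),(1:ℝ)))
      · exact ((hμcont.comp continuous_fst.continuousOn (fun p hp => hp.1)).mul
          hvH.continuousOn).mul (hLHw ((0:ℝ),(1:ℝ)))
    have hK2 : IsCompact (Icc xL xR ×ˢ Icc (s₀ - δ₁) (s₀ + δ₁)) :=
      isCompact_Icc.prod isCompact_Icc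
    have hK2Q : Icc xL xR ×ˢ Icc (s₀ - δ₁) (s₀ + δ₁) ⊆ Q :=
      prod_mono subset_rfl (hsub2.trans Ioo_subset_Icc_self)
    obtain ⟨C, hC⟩ := hK2.exists_bound_of_continuousOn (hWc.mono hK2Q)
    have main := (intervalIntegral.hasDerivAt_integral_of_dominated_loc_of_deriv_le
      (F := fun s x => P s x) (F' := F') (bound := fun _ => C) (a := xL) (b := xR) (x₀ := s₀)
      (μ := volume) (s := Metric.ball s₀ δ₁)
      (Metric.ball_mem_nhds s₀ hδ₁pos)
      (Filter.Eventually.of_forall (fun s =>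
        ((hPc.comp (continuous_const.prodMk continuous_id)).aestronglyMeasurable).restrict))
      ((hPc.comp (continuous_const.prodMk continuous_id)).intervalIntegrable _ _)
      (by
        have hcont : ContinuousOn (fun x => F' s₀ x) (Icc xL xR) :=
          hWc.comp (continuous_id.prodMk continuous_const).continuousOn
            (fun x hx' => ⟨hx', hs₀Icc⟩)
        rw [hIoc]
        exact (hcont.mono Ioc_subset_Icc_self).aestronglyMeasurable measurableSet_Ioc)
      (Filter.Eventually.of_forall (fun x hx s hs => by
        have hx' : x ∈ Icc xL xR := Ioc_subset_Icc_self (hIoc ▸ hx)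
        have hs' : s ∈ Icc (s₀ - δ₁) (s₀ + δ₁) :=
          Ioo_subset_Icc_self (by rwa [Real.ball_eq_Ioo] at hs)
        exact hC (x, s) ⟨hx', hs'⟩))
      intervalIntegrable_const
      (Filter.Eventually.of_forall (fun x hx s hs => by
        have hx' : x ∈ Icc xL xR := Ioc_subset_Icc_self (hIoc ▸ hx)
        have hs' : s ∈ Ioo (0:ℝ) T := hball hs
        have h1 := keyT vE hvE x hx' s hs'
        have h2 := keyT vH hvH x hx' s hs'
        have h3 : HasDerivAt (fun u => ε x * vE x u ^ 2 + μ x * vH x u ^ 2) (F' s x) s := by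
          have hcomb := ((h1.pow 2).const_mul (ε x)).add ((h2.pow 2).const_mul (μ x))
          refine hcomb.congr_deriv ?_
          rw [hF'def]
          push_cast
          ring
        refine h3.congr_of_eventuallyEq ?_
        filter_upwards [isOpen_Ioo.mem_nhds hs'] with u hu
        simp only [hPdef]
        rw [hcx_id x hx', hct_id u (Ioo_subset_Icc_self hu)]))).2
    -- now rewrite the integral of F' s₀
    have hbc := hBC s₀ hs₀Icc
    set Gd : ℝ → ℝ := fun x =>
      (LE (x, s₀) ((1:ℝ),(0:ℝ))) * vH x s₀ + vE x s₀ * (LH (x, s₀) ((1:ℝ),(0:ℝ))) with hGddef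
    have hGdc : ContinuousOn Gd (Icc xL xR) := by
      apply ContinuousOn.add
      · exact (((hLEw ((1:ℝ),(0:ℝ))).comp (continuous_id.prodMk continuous_const).continuousOn
          (fun x hx' => ⟨hx', hs₀Icc⟩)).mul (hsliceH s₀ hs₀Icc))
      · exact ((hsliceE s₀ hs₀Icc).mul
          ((hLHw ((1:ℝ),(0:ℝ))).comp (continuous_id.prodMk continuous_const).continuousOn
          (fun x hx' => ⟨hx', hs₀Icc⟩)))
    have hprodc : ContinuousOn (fun x => vE x s₀ * vH x s₀) (Icc xL xR) :=
      (hsliceE s₀ hs₀Icc).mul (hsliceH s₀ hs₀Icc)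
    have hFTC : ∫ x in xL..xR, Gd x = vE xR s₀ * vH xR s₀ - vE xL s₀ * vH xL s₀ := by
      apply intervalIntegral.integral_eq_sub_of_hasDeriv_right_of_le hxle hprodc
      · intro x hx'
        exact (((keyX vE hvE x hx' s₀ hs₀Icc).mul (keyX vH hvH x hx' s₀ hs₀Icc))).hasDerivWithinAt
      · exact (by rw [uIcc_of_le hxle]; exact hGdc : ContinuousOn Gd (uIcc xL xR)).intervalIntegrable
    have hFTC0 : ∫ x in xL..xR, Gd x = 0 := by rw [hFTC, hbc.1, hbc.2]; ring
    have hint1 : IntervalIntegrable (Db s₀) volume xL xR :=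
      (hDbc.comp (continuous_const.prodMk continuous_id)).intervalIntegrable _ _
    have hint2 : IntervalIntegrable (fun x => 2 * Gd x) volume xL xR :=
      ((by rw [uIcc_of_le hxle]; exact hGdc : ContinuousOn Gd (uIcc xL xR)).intervalIntegrable).const_mul 2
    have hae : ∀ᵐ x ∂volume, x ∈ Set.uIoc xL xR → F' s₀ x = Db s₀ x - 2 * Gd x := by
      filter_upwards [hxRnull] with x hxR hx
      have hx' : x ∈ Ioo xL xR := by
        rw [hIoc] at hx; exact ⟨hx.1, lt_of_le_of_ne hx.2 hxR⟩
      have hxIcc : x ∈ Icc xL xR := Ioo_subset_Icc_self hx'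
      have e2 : (LH (x, s₀)) ((1:ℝ),(0:ℝ)) + ε x * (LE (x, s₀)) ((0:ℝ),(1:ℝ)) = ψ x s₀ := by
        have hp := hPDE2 x hx' s₀ hs₀
        simp only [pdX, pdT] at hp
        rw [(keyX vH hvH x hx' s₀ hs₀Icc).deriv, (keyT vE hvE x hxIcc s₀ hs₀).deriv] at hp
        exact hp
      have e1 : (LE (x, s₀)) ((1:ℝ),(0:ℝ)) + μ x * (LH (x, s₀)) ((0:ℝ),(1:ℝ)) = φ x s₀ := by
        have hp := hPDE1 x hx' s₀ hs₀
        simp only [pdX, pdT] at hp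
        rw [(keyX vE hvE x hx' s₀ hs₀Icc).deriv, (keyT vH hvH x hxIcc s₀ hs₀).deriv] at hp
        exact hp
      simp only [hF'def, hDbdef, hGddef]
      rw [hcx_id x hxIcc, hct_id s₀ hs₀Icc]
      linear_combination (2 * vE x s₀) * e2 + (2 * vH x s₀) * e1
    have hFTC2 : ∫ x in xL..xR, 2 * Gd x = 0 := by
      rw [intervalIntegral.integral_const_mul, hFTC0, mul_zero]
    have hint_eq : ∫ x in xL..xR, F' s₀ x = Df s₀ := by
      rw [intervalIntegral.integral_congr_ae hae, intervalIntegral.integral_sub hint1 hint2,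
        hFTC2, sub_zero]
    rw [hint_eq] at main
    exact main
  -- FTC for Ef
  have hEfeq : ∀ r ∈ Icc (0:ℝ) T, Ef r = ∫ s in (0:ℝ)..r, Df s := by
    intro r hr
    have h := intervalIntegral.integral_eq_sub_of_hasDeriv_right_of_le hr.1
      hEfc.continuousOn
      (fun s hs => (hEfD s ⟨hs.1, lt_of_lt_of_le hs.2 hr.2⟩).hasDerivWithinAt)
      (hDfc.intervalIntegrable _ _)
    rw [h, hE0, sub_zero]
  -- Cauchy-Schwarz in x, for each fixed time s
  have hDb_le : ∀ s ∈ Icc (0:ℝ) T,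
      Df s ≤ 2 * (Real.sqrt (Ef s) * (cinf * Real.sqrt (Ff s))) := by
    intro s hs
    set f₀ : ℝ → ℝ := fun x => Real.sqrt (P s x) with hf₀
    set Gq : ℝ → ℝ :=
      fun x => ψ (cx x) (ct s) ^ 2 / ε (cx x) + φ (cx x) (ct s) ^ 2 / μ (cx x) with hGq
    set g₀ : ℝ → ℝ := fun x => Real.sqrt (Gq x) with hg₀
    have hPsc : Continuous (fun x => P s x) := hPc.comp (continuous_const.prodMk continuous_id)
    have hψsc : Continuous (fun x => ψ (cx x) (ct s)) :=
      hψb.comp (continuous_id.prodMk continuous_const)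
    have hφsc : Continuous (fun x => φ (cx x) (ct s)) :=
      hφb.comp (continuous_id.prodMk continuous_const)
    have hGqc : Continuous Gq :=
      ((hψsc.pow 2).div hεb (fun x => (hεbpos x).ne')).add
        ((hφsc.pow 2).div hμb (fun x => (hμbpos x).ne'))
    have hf₀c : Continuous f₀ := Real.continuous_sqrt.comp hPsc
    have hg₀c : Continuous g₀ := Real.continuous_sqrt.comp hGqc
    have hGqnn : ∀ x, 0 ≤ Gq x := fun x =>
      add_nonneg (div_nonneg (sq_nonneg _) (hεbpos x).le)
        (div_nonneg (sq_nonneg _) (hμbpos x).le)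
    have hDbsc : Continuous (fun x => Db s x) := hDbc.comp (continuous_const.prodMk continuous_id)
    have hpt : ∀ x ∈ Icc xL xR, Db s x ≤ 2 * (f₀ x * g₀ x) := by
      intro x _
      have hεp := hεbpos x; have hμp := hμbpos x
      have hsε : (0:ℝ) < Real.sqrt (ε (cx x)) := Real.sqrt_pos.2 hεp
      have hsμ : (0:ℝ) < Real.sqrt (μ (cx x)) := Real.sqrt_pos.2 hμp
      have hcs := aux_l2cs (Real.sqrt (ε (cx x)) * vE (cx x) (ct s))
        (Real.sqrt (μ (cx x)) * vH (cx x) (ct s))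
        (ψ (cx x) (ct s) / Real.sqrt (ε (cx x)))
        (φ (cx x) (ct s) / Real.sqrt (μ (cx x)))
      have e1 : (Real.sqrt (ε (cx x)) * vE (cx x) (ct s)) * (ψ (cx x) (ct s) / Real.sqrt (ε (cx x)))
          + (Real.sqrt (μ (cx x)) * vH (cx x) (ct s)) * (φ (cx x) (ct s) / Real.sqrt (μ (cx x)))
          = vE (cx x) (ct s) * ψ (cx x) (ct s) + vH (cx x) (ct s) * φ (cx x) (ct s) := by
        field_simp
      have e2 : (Real.sqrt (ε (cx x)) * vE (cx x) (ct s)) ^ 2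
          + (Real.sqrt (μ (cx x)) * vH (cx x) (ct s)) ^ 2 = P s x := by
        simp only [hPdef]; rw [mul_pow, mul_pow, Real.sq_sqrt hεp.le, Real.sq_sqrt hμp.le]
      have e3 : (ψ (cx x) (ct s) / Real.sqrt (ε (cx x))) ^ 2
          + (φ (cx x) (ct s) / Real.sqrt (μ (cx x))) ^ 2 = Gq x := by
        simp only [hGq]; rw [div_pow, div_pow, Real.sq_sqrt hεp.le, Real.sq_sqrt hμp.le]
      rw [e1, e2, e3] at hcs
      simp only [hDbdef, hf₀, hg₀]
      linarith [hcs]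
    have h1 : Df s ≤ ∫ x in xL..xR, 2 * (f₀ x * g₀ x) :=
      intervalIntegral.integral_mono_on hxle (hDbsc.intervalIntegrable _ _)
        ((continuous_const.mul (hf₀c.mul hg₀c)).intervalIntegrable _ _) hpt
    have h2 : ∫ x in xL..xR, 2 * (f₀ x * g₀ x) = 2 * ∫ x in xL..xR, f₀ x * g₀ x :=
      intervalIntegral.integral_const_mul _ _
    have h3 := aux_intcs hxle hf₀c hg₀c (fun x => Real.sqrt_nonneg _) (fun x => Real.sqrt_nonneg _)
    have h4 : ∫ x in xL..xR, f₀ x ^ 2 = Ef s := by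
      apply intervalIntegral.integral_congr
      intro x _; exact Real.sq_sqrt (hPnn s x)
    have h5 : ∫ x in xL..xR, g₀ x ^ 2 = ∫ x in xL..xR, Gq x := by
      apply intervalIntegral.integral_congr
      intro x _; exact Real.sq_sqrt (hGqnn x)
    have hFbsc : Continuous (fun x => Fb s x) := hFbc.comp (continuous_const.prodMk continuous_id)
    have h6 : ∫ x in xL..xR, Gq x ≤ cinf ^ 2 * Ff s := by
      have hmono : ∀ x ∈ Icc xL xR, Gq x ≤ cinf ^ 2 * Fb s x := by
        intro x _
        have hεp := hεbpos x; have hμp := hμbpos x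
        have hc2' := hc2 (cx x) (hcx_mem x)
        have t1 : ψ (cx x) (ct s) ^ 2 / ε (cx x) ≤ cinf ^ 2 * (μ (cx x) * ψ (cx x) (ct s) ^ 2) := by
          rw [div_le_iff₀ hεp]
          calc ψ (cx x) (ct s) ^ 2
              = ψ (cx x) (ct s) ^ 2 * ε (cx x) * μ (cx x) * (ε (cx x) * μ (cx x))⁻¹ := by
                field_simp
            _ ≤ ψ (cx x) (ct s) ^ 2 * ε (cx x) * μ (cx x) * cinf ^ 2 :=
                mul_le_mul_of_nonneg_left hc2' (by positivity)
            _ = cinf ^ 2 * (μ (cx x) * ψ (cx x) (ct s) ^ 2) * ε (cx x) := by ring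
        have t2 : φ (cx x) (ct s) ^ 2 / μ (cx x) ≤ cinf ^ 2 * (ε (cx x) * φ (cx x) (ct s) ^ 2) := by
          rw [div_le_iff₀ hμp]
          calc φ (cx x) (ct s) ^ 2
              = φ (cx x) (ct s) ^ 2 * ε (cx x) * μ (cx x) * (ε (cx x) * μ (cx x))⁻¹ := by
                field_simp
            _ ≤ φ (cx x) (ct s) ^ 2 * ε (cx x) * μ (cx x) * cinf ^ 2 :=
                mul_le_mul_of_nonneg_left hc2' (by positivity)
            _ = cinf ^ 2 * (ε (cx x) * φ (cx x) (ct s) ^ 2) * μ (cx x) := by ring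
        calc Gq x ≤ cinf ^ 2 * (μ (cx x) * ψ (cx x) (ct s) ^ 2)
              + cinf ^ 2 * (ε (cx x) * φ (cx x) (ct s) ^ 2) := add_le_add t1 t2
          _ = cinf ^ 2 * Fb s x := by simp only [hFbdef]; ring
      calc ∫ x in xL..xR, Gq x ≤ ∫ x in xL..xR, cinf ^ 2 * Fb s x :=
            intervalIntegral.integral_mono_on hxle (hGqc.intervalIntegrable _ _)
              ((continuous_const.mul hFbsc).intervalIntegrable _ _) hmono
        _ = cinf ^ 2 * Ff s := intervalIntegral.integral_const_mul _ _
    have h7 : Real.sqrt (∫ x in xL..xR, g₀ x ^ 2) ≤ cinf * Real.sqrt (Ff s) := by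
      rw [h5]
      calc Real.sqrt (∫ x in xL..xR, Gq x) ≤ Real.sqrt (cinf ^ 2 * Ff s) := Real.sqrt_le_sqrt h6
        _ = cinf * Real.sqrt (Ff s) := by
            rw [Real.sqrt_mul (sq_nonneg cinf), Real.sqrt_sq hcpos.le]
    rw [h4] at h3
    have h8 : ∫ x in xL..xR, f₀ x * g₀ x ≤ Real.sqrt (Ef s) * (cinf * Real.sqrt (Ff s)) :=
      h3.trans (mul_le_mul_of_nonneg_left h7 (Real.sqrt_nonneg _))
    linarith [h1, h2, h8]
  -- the final Gronwall argument
  set Jv : ℝ := ∫ s in (0:ℝ)..t, Ff s with hJv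
  have hJnn : 0 ≤ Jv := intervalIntegral.integral_nonneg ht0 (fun s _ => hFnn s)
  set K : ℝ := cinf * Real.sqrt Jv with hK
  have hKnn : 0 ≤ K := mul_nonneg hcpos.le (Real.sqrt_nonneg _)
  have hIderiv : ∀ r : ℝ, HasDerivAt If (Ef r) r := fun r =>
    intervalIntegral.integral_hasDerivAt_right (hEfc.intervalIntegrable _ _)
      (hEfc.stronglyMeasurableAtFilter _ _) hEfc.continuousAt
  have hsqEc : Continuous (fun s => Real.sqrt (Ef s)) := Real.continuous_sqrt.comp hEfc
  have hsqFc : Continuous (fun s => Real.sqrt (Ff s)) := Real.continuous_sqrt.comp hFfc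
  have hEbd : ∀ r ∈ Icc (0:ℝ) t, Ef r ≤ 2 * K * Real.sqrt (If r) := by
    intro r hr
    have hrT : r ∈ Icc (0:ℝ) T := ⟨hr.1, hr.2.trans htT⟩
    rw [hEfeq r hrT]
    have hrhsc : Continuous (fun s => 2 * (Real.sqrt (Ef s) * (cinf * Real.sqrt (Ff s)))) :=
      continuous_const.mul (hsqEc.mul (continuous_const.mul hsqFc))
    have hstep1 : ∫ s in (0:ℝ)..r, Df s
        ≤ ∫ s in (0:ℝ)..r, 2 * (Real.sqrt (Ef s) * (cinf * Real.sqrt (Ff s))) :=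
      intervalIntegral.integral_mono_on hr.1 (hDfc.intervalIntegrable _ _)
        (hrhsc.intervalIntegrable _ _)
        (fun s hs => hDb_le s ⟨hs.1, hs.2.trans hrT.2⟩)
    have hstep2 : ∫ s in (0:ℝ)..r, 2 * (Real.sqrt (Ef s) * (cinf * Real.sqrt (Ff s)))
        = 2 * cinf * ∫ s in (0:ℝ)..r, Real.sqrt (Ef s) * Real.sqrt (Ff s) := by
      rw [← intervalIntegral.integral_const_mul]
      apply intervalIntegral.integral_congr
      intro s _; ring
    have h3 := aux_intcs hr.1 hsqEc hsqFc (fun s => Real.sqrt_nonneg _) (fun s => Real.sqrt_nonneg _)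
    have h4 : ∫ s in (0:ℝ)..r, (Real.sqrt (Ef s)) ^ 2 = If r := by
      apply intervalIntegral.integral_congr
      intro s _; exact Real.sq_sqrt (hEnn s)
    have h5 : ∫ s in (0:ℝ)..r, (Real.sqrt (Ff s)) ^ 2 = ∫ s in (0:ℝ)..r, Ff s := by
      apply intervalIntegral.integral_congr
      intro s _; exact Real.sq_sqrt (hFnn s)
    have h6 : ∫ s in (0:ℝ)..r, Ff s ≤ Jv :=
      intervalIntegral.integral_mono_interval le_rfl hr.1 hr.2
        (Filter.Eventually.of_forall (fun s => hFnn s)) (hFfc.intervalIntegrable _ _)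
    rw [h4, h5] at h3
    have h7 : Real.sqrt (∫ s in (0:ℝ)..r, Ff s) ≤ Real.sqrt Jv := Real.sqrt_le_sqrt h6
    have h8 : ∫ s in (0:ℝ)..r, Real.sqrt (Ef s) * Real.sqrt (Ff s)
        ≤ Real.sqrt (If r) * Real.sqrt Jv :=
      h3.trans (mul_le_mul_of_nonneg_left h7 (Real.sqrt_nonneg _))
    calc ∫ s in (0:ℝ)..r, Df s
        ≤ 2 * cinf * ∫ s in (0:ℝ)..r, Real.sqrt (Ef s) * Real.sqrt (Ff s) := by
          rw [← hstep2]; exact hstep1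
      _ ≤ 2 * cinf * (Real.sqrt (If r) * Real.sqrt Jv) := by
          apply mul_le_mul_of_nonneg_left h8 (by positivity)
      _ = 2 * K * Real.sqrt (If r) := by rw [hK]; ring
  have hI0 : If 0 = 0 := intervalIntegral.integral_same
  have hInn : ∀ s ∈ Icc (0:ℝ) t, 0 ≤ If s := fun s hs =>
    intervalIntegral.integral_nonneg hs.1 (fun u _ => hEnn u)
  have hfin := aux_gronwall ht0 hKnn hI0 hInn (fun s _ => hIderiv s) hEbd
  -- rewrite the goal in terms of If and Jv
  have hgL : (∫ s in (0:ℝ)..t, ∫ x in xL..xR, (ε x * vE x s ^ 2 + μ x * vH x s ^ 2)) = If t := by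
    apply intervalIntegral.integral_congr
    intro s hs
    rw [uIcc_of_le ht0] at hs
    have hsT : s ∈ Icc (0:ℝ) T := ⟨hs.1, hs.2.trans htT⟩
    apply intervalIntegral.integral_congr
    intro x hx'
    rw [uIcc_of_le hxle] at hx'
    simp only [hPdef]
    rw [hcx_id x hx', hct_id s hsT]
  have hgR : (∫ s in (0:ℝ)..t, ∫ x in xL..xR, (ε x * φ x s ^ 2 + μ x * ψ x s ^ 2)) = Jv := by
    apply intervalIntegral.integral_congr
    intro s hs
    rw [uIcc_of_le ht0] at hs
    have hsT : s ∈ Icc (0:ℝ) T := ⟨hs.1, hs.2.trans htT⟩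
    apply intervalIntegral.integral_congr
    intro x hx'
    rw [uIcc_of_le hxle] at hx'
    simp only [hFbdef]
    rw [hcx_id x hx', hct_id s hsT]
  rw [hgL, hgR]
  have hKsq : K ^ 2 = cinf ^ 2 * Jv := by
    rw [hK, mul_pow, Real.sq_sqrt hJnn]
  calc If t ≤ K ^ 2 * t ^ 2 := hfin
    _ = t ^ 2 * cinf ^ 2 * Jv := by rw [hKsq]; ring
end

section
/- Let c>0, T>0, and let f be continuous on ℝ×[0,T]. Define u(x,t) := ∫_0^t c · f( x + c(s−t), s ) ds for (x,t)∈ℝ×[0,T]. Then for every t∈[0,T] and every interval (x_L,x_R), ∫_{x_L}^{x_R} u(x,t)² dx ≤ t c² ∫_0^t ∫_{x_L+c(s−t)}^{x_R+c(s−t)} f(y,s)² dy ds. -/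
open MeasureTheory Set

/-- Cauchy–Schwarz for interval integrals of continuous functions. -/
lemma cs_aux {h : ℝ → ℝ} (hh : Continuous h) {t : ℝ} (ht : 0 ≤ t) :
    (∫ s in (0:ℝ)..t, h s) ^ 2 ≤ t * ∫ s in (0:ℝ)..t, (h s) ^ 2 := by
  set I := ∫ s in (0:ℝ)..t, h s with hI
  set J := ∫ s in (0:ℝ)..t, (h s) ^ 2 with hJ
  have step : ∀ a : ℝ, h a * I ≤ (t * (h a) ^ 2 + J) / 2 := by
    intro a
    have e1 : h a * I = ∫ b in (0:ℝ)..t, h a * h b :=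
      (intervalIntegral.integral_const_mul _ _).symm
    have e2 : (∫ b in (0:ℝ)..t, ((h a) ^ 2 + (h b) ^ 2) / 2) = (t * (h a) ^ 2 + J) / 2 := by
      rw [intervalIntegral.integral_div,
        intervalIntegral.integral_add (g := fun x => h x ^ 2) (intervalIntegrable_const)
          ((hh.pow 2).intervalIntegrable 0 t)]
      simp [hJ]
    rw [e1, ← e2]
    refine intervalIntegral.integral_mono_on ht
      ((continuous_const.mul hh).intervalIntegrable 0 t)
      (((continuous_const.add (hh.pow 2)).div_const 2).intervalIntegrable 0 t) ?_
    intro b _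
    nlinarith [sq_nonneg (h a - h b)]
  have e3 : I ^ 2 = ∫ a in (0:ℝ)..t, h a * I := by
    rw [intervalIntegral.integral_mul_const]; ring
  have e4 : (∫ a in (0:ℝ)..t, (t * (h a) ^ 2 + J) / 2) = t * J := by
    rw [intervalIntegral.integral_div,
      intervalIntegral.integral_add (f := fun x => t * h x ^ 2)
        ((continuous_const.mul (hh.pow 2)).intervalIntegrable 0 t) intervalIntegrable_const,
      intervalIntegral.integral_const_mul]
    simp [hJ]
  calc I ^ 2 = ∫ a in (0:ℝ)..t, h a * I := e3
    _ ≤ ∫ a in (0:ℝ)..t, (t * (h a) ^ 2 + J) / 2 := by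
        refine intervalIntegral.integral_mono_on ht
          ((hh.mul continuous_const).intervalIntegrable 0 t)
          ((((continuous_const.mul (hh.pow 2)).add continuous_const).div_const 2).intervalIntegrable 0 t)
          fun a _ => step a
    _ = t * J := e4

/-- Fubini for iterated interval integrals of continuous functions. -/
lemma swap_aux {G : ℝ → ℝ → ℝ} (hG : Continuous fun p : ℝ × ℝ => G p.1 p.2)
    {a b a' b' : ℝ} (h1 : a ≤ b) (h2 : a' ≤ b') :
    (∫ x in a..b, ∫ s in a'..b', G x s) = ∫ s in a'..b', ∫ x in a..b, G x s := by
  have hInt : Integrable (Function.uncurry G)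
      ((volume.restrict (Ioc a b)).prod (volume.restrict (Ioc a' b'))) := by
    rw [Measure.prod_restrict]
    exact (hG.continuousOn.integrableOn_compact (isCompact_Icc.prod isCompact_Icc)).mono_set
      (Set.prod_mono Set.Ioc_subset_Icc_self Set.Ioc_subset_Icc_self)
  simp_rw [intervalIntegral.integral_of_le h1, intervalIntegral.integral_of_le h2]
  exact integral_integral_swap hInt

theorem stmt12 (c T : ℝ) (hc : 0 < c) (hT : 0 < T)
    (f : ℝ → ℝ → ℝ)
    (hf : ContinuousOn (fun p : ℝ × ℝ => f p.1 p.2) (Set.univ ×ˢ Set.Icc 0 T))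
    (u : ℝ → ℝ → ℝ)
    (hu : u = fun x t => ∫ s in (0 : ℝ)..t, c * f (x + c * (s - t)) s) :
    ∀ t ∈ Set.Icc (0 : ℝ) T, ∀ xL xR : ℝ, xL ≤ xR →
      (∫ x in xL..xR, (u x t) ^ 2)
        ≤ t * c ^ 2 * ∫ s in (0 : ℝ)..t,
            ∫ y in (xL + c * (s - t))..(xR + c * (s - t)), (f y s) ^ 2 := by
  subst hu
  rintro t ⟨ht0, htT⟩ xL xR hx
  set F : ℝ → ℝ → ℝ := fun x s => f x (max 0 (min s T)) with hFdef
  have hF : Continuous fun p : ℝ × ℝ => F p.1 p.2 := by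
    have hm : Continuous fun p : ℝ × ℝ => (p.1, max 0 (min p.2 T)) :=
      continuous_fst.prodMk (continuous_const.max (continuous_snd.min continuous_const))
    exact hf.comp_continuous hm fun p =>
      ⟨Set.mem_univ _, le_max_left _ _, max_le hT.le (min_le_right _ _)⟩
  have hFs : ∀ x s, s ∈ Icc (0:ℝ) t → F x s = f x s := by
    intro x s hs
    simp [hFdef, min_eq_left (hs.2.trans htT), max_eq_right hs.1]
  have hcont : ∀ x : ℝ, Continuous fun s => c * F (x + c * (s - t)) s := by
    intro x
    exact continuous_const.mul
      (hF.comp ((continuous_const.add (continuous_const.mul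
        (continuous_id.sub continuous_const))).prodMk continuous_id))
  have hG : Continuous fun p : ℝ × ℝ => c ^ 2 * (F (p.1 + c * (p.2 - t)) p.2) ^ 2 := by
    exact continuous_const.mul
      ((hF.comp ((continuous_fst.add (continuous_const.mul
        (continuous_snd.sub continuous_const))).prodMk continuous_snd)).pow 2)
  have hu_eq : ∀ x : ℝ, (∫ s in (0:ℝ)..t, c * f (x + c * (s - t)) s)
      = ∫ s in (0:ℝ)..t, c * F (x + c * (s - t)) s := by
    intro x
    refine intervalIntegral.integral_congr fun s hs => ?_
    rw [Set.uIcc_of_le ht0] at hs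
    rw [hFs _ s hs]
  have L1 : (∫ x in xL..xR, (∫ s in (0:ℝ)..t, c * f (x + c * (s - t)) s) ^ 2)
      = ∫ x in xL..xR, (∫ s in (0:ℝ)..t, c * F (x + c * (s - t)) s) ^ 2 := by
    refine intervalIntegral.integral_congr fun x _ => ?_
    rw [hu_eq x]
  have R1 : (∫ s in (0:ℝ)..t, ∫ y in (xL + c * (s - t))..(xR + c * (s - t)), (f y s) ^ 2)
      = ∫ s in (0:ℝ)..t, ∫ y in (xL + c * (s - t))..(xR + c * (s - t)), (F y s) ^ 2 := by
    refine intervalIntegral.integral_congr fun s hs => ?_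
    rw [Set.uIcc_of_le ht0] at hs
    exact intervalIntegral.integral_congr fun y _ => by rw [hFs y s hs]
  have key1 : ∀ x : ℝ, (∫ s in (0:ℝ)..t, c * F (x + c * (s - t)) s) ^ 2
      ≤ t * ∫ s in (0:ℝ)..t, c ^ 2 * (F (x + c * (s - t)) s) ^ 2 := by
    intro x
    have := cs_aux (hcont x) ht0
    simpa [mul_pow] using this
  have contu : Continuous fun x : ℝ => ∫ s in (0:ℝ)..t, c * F (x + c * (s - t)) s := by
    apply intervalIntegral.continuous_parametric_intervalIntegral_of_continuous'
      (f := fun x s => c * F (x + c * (s - t)) s)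
    exact continuous_const.mul
      (hF.comp ((continuous_fst.add (continuous_const.mul
        (continuous_snd.sub continuous_const))).prodMk continuous_snd))
  have contv : Continuous fun x : ℝ => ∫ s in (0:ℝ)..t, c ^ 2 * (F (x + c * (s - t)) s) ^ 2 := by
    apply intervalIntegral.continuous_parametric_intervalIntegral_of_continuous'
      (f := fun x s => c ^ 2 * (F (x + c * (s - t)) s) ^ 2)
    exact hG
  have step4 : ∀ s : ℝ, (∫ x in xL..xR, c ^ 2 * (F (x + c * (s - t)) s) ^ 2)
      = ∫ y in (xL + c * (s - t))..(xR + c * (s - t)), c ^ 2 * (F y s) ^ 2 := fun s =>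
    intervalIntegral.integral_comp_add_right (fun y => c ^ 2 * (F y s) ^ 2) (c * (s - t))
  calc (∫ x in xL..xR, (∫ s in (0:ℝ)..t, c * f (x + c * (s - t)) s) ^ 2)
      = ∫ x in xL..xR, (∫ s in (0:ℝ)..t, c * F (x + c * (s - t)) s) ^ 2 := L1
    _ ≤ ∫ x in xL..xR, t * ∫ s in (0:ℝ)..t, c ^ 2 * (F (x + c * (s - t)) s) ^ 2 := by
        refine intervalIntegral.integral_mono_on hx
          ((contu.pow 2).intervalIntegrable _ _)
          ((continuous_const.mul contv).intervalIntegrable _ _) fun x _ => key1 x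
    _ = t * ∫ x in xL..xR, ∫ s in (0:ℝ)..t, c ^ 2 * (F (x + c * (s - t)) s) ^ 2 :=
        intervalIntegral.integral_const_mul _ _
    _ = t * ∫ s in (0:ℝ)..t, ∫ x in xL..xR, c ^ 2 * (F (x + c * (s - t)) s) ^ 2 := by
        rw [swap_aux (G := fun x s => c ^ 2 * (F (x + c * (s - t)) s) ^ 2) hG hx ht0]
    _ = t * ∫ s in (0:ℝ)..t, c ^ 2 * ∫ y in (xL + c * (s - t))..(xR + c * (s - t)), (F y s) ^ 2 := by
        congr 1
        refine intervalIntegral.integral_congr fun s _ => ?_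
        rw [step4 s, intervalIntegral.integral_const_mul]
    _ = t * c ^ 2 * ∫ s in (0:ℝ)..t, ∫ y in (xL + c * (s - t))..(xR + c * (s - t)), (F y s) ^ 2 := by
        rw [intervalIntegral.integral_const_mul, mul_assoc]
    _ = t * c ^ 2 * ∫ s in (0:ℝ)..t, ∫ y in (xL + c * (s - t))..(xR + c * (s - t)), (f y s) ^ 2 := by
        rw [R1]
end

section
/- Let D=(x₀,x₁)×(t₀,t₁)⊂ℝ² be a space–time rectangle and c>0, and set Ω_D⁻=(x₀−ct₁, x₁−ct₀). Then there is no constant C>0 such that ‖u₀‖_{L²(Ω_D⁻)} ≤ C ‖u‖_{L²(D)} holds for all u₀ ∈ L²(Ω_D⁻), where u(x,t) := u₀(x−ct) on D. In particular, for each sufficiently large ℓ∈ℕ the function u_{0,ℓ}(z) := √ℓ · χ_{(x₀−ct₁, x₀−ct₁+1/ℓ)}(z) satisfies ‖u_{0,ℓ}‖_{L²(Ω_D⁻)} = 1 while ‖u_ℓ‖_{L²(D)} = (2cℓ)^{−1/2} for u_ℓ(x,t) := u_{0,ℓ}(x−ct). -/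
open MeasureTheory Set

lemma stmt14_aux (x₀ x₁ t₀ t₁ c : ℝ) (hx : x₀ < x₁) (ht : t₀ < t₁) (hc : 0 < c)
    (ℓ : ℕ) (hℓ : 0 < ℓ) (hε : (1 : ℝ) / ℓ ≤ min (x₁ - x₀) (c * (t₁ - t₀))) :
    Real.sqrt ((∫ z in Set.Ioo (x₀ - c * t₁) (x₁ - c * t₀),
        ((Set.Ioo (x₀ - c * t₁) (x₀ - c * t₁ + 1 / ℓ)).indicator
          (fun _ => Real.sqrt ℓ) z) ^ 2)) = 1 ∧
      Real.sqrt (∫ x in x₀..x₁, ∫ t in t₀..t₁,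
        ((Set.Ioo (x₀ - c * t₁) (x₀ - c * t₁ + 1 / ℓ)).indicator
          (fun _ => Real.sqrt ℓ) (x - c * t)) ^ 2)
        = (2 * c * ℓ) ^ (-(1 / 2) : ℝ) := by
  have hℓR : (0:ℝ) < ℓ := by exact_mod_cast hℓ
  set a := x₀ - c * t₁ with ha
  set ε := (1:ℝ)/(ℓ:ℝ) with hεdef
  have hεpos : 0 < ε := by positivity
  have hε1 : ε ≤ x₁ - x₀ := le_trans hε (min_le_left _ _)
  have hε2 : ε ≤ c * (t₁ - t₀) := le_trans hε (min_le_right _ _)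
  have hsq : ∀ z, ((Set.Ioo a (a + ε)).indicator (fun _ => Real.sqrt ℓ) z) ^ 2
      = (Set.Ioo a (a + ε)).indicator (fun _ => (ℓ:ℝ)) z := by
    intro z
    by_cases h : z ∈ Set.Ioo a (a + ε)
    · rw [Set.indicator_of_mem h, Set.indicator_of_mem h, Real.sq_sqrt hℓR.le]
    · rw [Set.indicator_of_notMem h, Set.indicator_of_notMem h]
      ring
  constructor
  · have hval : (∫ z in Set.Ioo a (x₁ - c * t₀),
        ((Set.Ioo a (a + ε)).indicator (fun _ => Real.sqrt ℓ) z) ^ 2) = 1 := by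
      simp_rw [hsq]
      rw [setIntegral_indicator measurableSet_Ioo, Set.Ioo_inter_Ioo,
        setIntegral_const, smul_eq_mul]
      have h1 : a ⊔ a = a := sup_idem a
      have h2 : (x₁ - c * t₀) ⊓ (a + ε) = a + ε := by
        apply inf_eq_right.2
        have h3 : c * t₀ ≤ c * t₁ := by nlinarith
        linarith [ha, h3]
      rw [h1, h2, measureReal_def, Real.volume_Ioo, add_sub_cancel_left,
        ENNReal.toReal_ofReal hεpos.le]
      rw [hεdef]
      field_simp
    rw [hval, Real.sqrt_one]
  · -- the membership rewriting
    have hmemb : ∀ x t : ℝ, (x - c * t ∈ Set.Ioo a (a + ε)) ↔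
        t ∈ Set.Ioo ((x - a - ε)/c) ((x - a)/c) := by
      intro x t
      simp only [Set.mem_Ioo]
      rw [div_lt_iff₀ hc, lt_div_iff₀ hc]
      constructor <;> rintro ⟨h1, h2⟩ <;> constructor <;> nlinarith
    have hinner : ∀ x : ℝ, (∫ t in t₀..t₁,
        ((Set.Ioo a (a + ε)).indicator (fun _ => Real.sqrt ℓ) (x - c * t)) ^ 2)
        = (volume (Set.Ioo (t₀ ⊔ (x - a - ε)/c) (t₁ ⊓ (x - a)/c))).toReal * ℓ := by
      intro x
      have hpt : ∀ t : ℝ, ((Set.Ioo a (a + ε)).indicator (fun _ => Real.sqrt ℓ) (x - c * t)) ^ 2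
          = (Set.Ioo ((x - a - ε)/c) ((x - a)/c)).indicator (fun _ => (ℓ:ℝ)) t := by
        intro t
        rw [hsq]
        by_cases h : t ∈ Set.Ioo ((x - a - ε)/c) ((x - a)/c)
        · rw [Set.indicator_of_mem ((hmemb x t).2 h), Set.indicator_of_mem h]
        · rw [Set.indicator_of_notMem (fun hm => h ((hmemb x t).1 hm)),
            Set.indicator_of_notMem h]
      simp_rw [hpt]
      rw [intervalIntegral.integral_of_le ht.le, integral_Ioc_eq_integral_Ioo,
        setIntegral_indicator measurableSet_Ioo, Set.Ioo_inter_Ioo,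
        setIntegral_const, smul_eq_mul, measureReal_def]
    set G : ℝ → ℝ := fun x => (((x₀ + ε - x)/c) ⊔ 0) * ℓ with hGdef
    have hGcont : Continuous G := by
      apply Continuous.mul _ continuous_const
      exact (((continuous_const.sub continuous_id).div_const c).max continuous_const)
    have hG : ∀ x ∈ Set.uIcc x₀ x₁, (∫ t in t₀..t₁,
        ((Set.Ioo a (a + ε)).indicator (fun _ => Real.sqrt ℓ) (x - c * t)) ^ 2) = G x := by
      intro x hxm
      rw [Set.uIcc_of_le hx.le, Set.mem_Icc] at hxm
      obtain ⟨hx0, hx1⟩ := hxm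
      rw [hinner x]
      have hl : t₀ ⊔ (x - a - ε)/c = (x - a - ε)/c := by
        apply sup_eq_right.2
        rw [le_div_iff₀ hc]
        simp only [ha]; nlinarith
      have hr : t₁ ⊓ (x - a)/c = t₁ := by
        apply inf_eq_left.2
        rw [le_div_iff₀ hc]
        simp only [ha]; nlinarith
      rw [hl, hr, Real.volume_Ioo]
      have hkey : t₁ - (x - a - ε)/c = (x₀ + ε - x)/c := by
        field_simp [ha]; ring
      rw [hkey]
      by_cases hsgn : 0 ≤ (x₀ + ε - x)/c
      · rw [ENNReal.toReal_ofReal hsgn, hGdef]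
        simp [sup_eq_left.2 hsgn]
      · push_neg at hsgn
        rw [ENNReal.ofReal_of_nonpos hsgn.le, hGdef]
        simp [sup_eq_right.2 hsgn.le]
    have houter : (∫ x in x₀..x₁, ∫ t in t₀..t₁,
        ((Set.Ioo a (a + ε)).indicator (fun _ => Real.sqrt ℓ) (x - c * t)) ^ 2)
        = ∫ x in x₀..x₁, G x := intervalIntegral.integral_congr hG
    have hx0ε : x₀ ≤ x₀ + ε := by linarith
    have hxε1 : x₀ + ε ≤ x₁ := by linarith
    have hsplit : (∫ x in x₀..x₀+ε, G x) + (∫ x in x₀+ε..x₁, G x) = ∫ x in x₀..x₁, G x :=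
      intervalIntegral.integral_add_adjacent_intervals
        (hGcont.intervalIntegrable _ _) (hGcont.intervalIntegrable _ _)
    have hpiece2 : (∫ x in x₀+ε..x₁, G x) = 0 := by
      have : ∀ x ∈ Set.uIcc (x₀+ε) x₁, G x = (fun _ => (0:ℝ)) x := by
        intro x hxm
        rw [Set.uIcc_of_le hxε1, Set.mem_Icc] at hxm
        have : (x₀ + ε - x)/c ≤ 0 := by
          apply div_nonpos_of_nonpos_of_nonneg _ hc.le
          linarith [hxm.1]
        simp [hGdef, sup_eq_right.2 this]
      rw [intervalIntegral.integral_congr this, intervalIntegral.integral_zero]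
    have hpiece1 : (∫ x in x₀..x₀+ε, G x) = ε^2/(2*c) * ℓ := by
      have hcongr : ∀ x ∈ Set.uIcc x₀ (x₀+ε), G x = (fun x => (ℓ:ℝ)/c * ((x₀+ε) - x)) x := by
        intro x hxm
        rw [Set.uIcc_of_le hx0ε, Set.mem_Icc] at hxm
        have hnn : 0 ≤ (x₀ + ε - x)/c := by
          apply div_nonneg _ hc.le
          linarith [hxm.2]
        simp only [hGdef, sup_eq_left.2 hnn]
        field_simp
      rw [intervalIntegral.integral_congr hcongr, intervalIntegral.integral_const_mul,
        intervalIntegral.integral_sub intervalIntegrable_const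
          intervalIntegral.intervalIntegrable_id,
        intervalIntegral.integral_const, integral_id, smul_eq_mul]
      field_simp
      ring
    rw [houter, ← hsplit, hpiece1, hpiece2, add_zero]
    have hval : ε^2/(2*c) * ℓ = (2*c*(ℓ:ℝ))⁻¹ := by
      rw [hεdef]
      field_simp
    rw [hval, Real.sqrt_inv, Real.sqrt_eq_rpow, ← Real.rpow_neg (by positivity)]

theorem stmt14 (x₀ x₁ t₀ t₁ c : ℝ) (hx : x₀ < x₁) (ht : t₀ < t₁) (hc : 0 < c) :
    (¬ ∃ C : ℝ, 0 < C ∧ ∀ u₀ : ℝ → ℝ,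
        Real.sqrt (∫ z in Set.Ioo (x₀ - c * t₁) (x₁ - c * t₀), (u₀ z) ^ 2)
          ≤ C * Real.sqrt (∫ x in x₀..x₁, ∫ t in t₀..t₁, (u₀ (x - c * t)) ^ 2)) ∧
    (∀ ℓ : ℕ, 0 < ℓ → (1 : ℝ) / ℓ ≤ min (x₁ - x₀) (c * (t₁ - t₀)) →
      (Real.sqrt (∫ z in Set.Ioo (x₀ - c * t₁) (x₁ - c * t₀),
          ((Set.Ioo (x₀ - c * t₁) (x₀ - c * t₁ + 1 / ℓ)).indicator
            (fun _ => Real.sqrt ℓ) z) ^ 2) = 1 ∧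
        Real.sqrt (∫ x in x₀..x₁, ∫ t in t₀..t₁,
          ((Set.Ioo (x₀ - c * t₁) (x₀ - c * t₁ + 1 / ℓ)).indicator
            (fun _ => Real.sqrt ℓ) (x - c * t)) ^ 2)
          = (2 * c * ℓ) ^ (-(1 / 2) : ℝ))) := by
  constructor
  · rintro ⟨C, hC, hall⟩
    set m := min (x₁ - x₀) (c * (t₁ - t₀)) with hm
    have hmpos : 0 < m := lt_min (by linarith) (by nlinarith)
    set ℓ : ℕ := max ⌈C^2/(2*c)⌉₊ ⌈1/m⌉₊ + 1 with hℓdef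
    have hℓpos : 0 < ℓ := Nat.succ_pos _
    have hℓR : (0:ℝ) < ℓ := by exact_mod_cast hℓpos
    have hεm : (1:ℝ)/ℓ ≤ m := by
      have h1 : (1/m : ℝ) ≤ ℓ := by
        refine le_trans (Nat.le_ceil _) ?_
        exact_mod_cast Nat.le_succ_of_le (le_max_right _ _)
      rw [div_le_iff₀ hℓR]
      have : 1/m * m ≤ (ℓ:ℝ) * m := by nlinarith
      rw [one_div, inv_mul_cancel₀ hmpos.ne'] at this
      linarith [this, mul_comm (m:ℝ) (ℓ:ℝ)]
    obtain ⟨e1, e2⟩ := stmt14_aux x₀ x₁ t₀ t₁ c hx ht hc ℓ hℓpos hεm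
    have h := hall ((Set.Ioo (x₀ - c * t₁) (x₀ - c * t₁ + 1 / ℓ)).indicator
      (fun _ => Real.sqrt ℓ))
    rw [e1, e2] at h
    set s := Real.sqrt (2*c*(ℓ:ℝ)) with hs
    have hspos : 0 < s := Real.sqrt_pos.2 (by positivity)
    have hrw : (2*c*(ℓ:ℝ))^(-(1/2):ℝ) = s⁻¹ := by
      rw [hs, Real.sqrt_eq_rpow, ← Real.rpow_neg (by positivity)]
    rw [hrw] at h
    have hC2 : C^2 < 2*c*ℓ := by
      have h1 : C^2/(2*c) ≤ (⌈C^2/(2*c)⌉₊ : ℝ) := Nat.le_ceil _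
      have h2 : (⌈C^2/(2*c)⌉₊ : ℝ) < ℓ := by
        exact_mod_cast Nat.lt_succ_of_le (le_max_left _ _)
      have h3 : C^2/(2*c) < (ℓ:ℝ) := lt_of_le_of_lt h1 h2
      rw [div_lt_iff₀ (by positivity)] at h3
      nlinarith
    have hCs : C < s := by
      have := Real.sqrt_lt_sqrt (by positivity) hC2
      rwa [Real.sqrt_sq hC.le] at this
    have hlt : C * s⁻¹ < 1 := by
      rw [← mul_inv_cancel₀ hspos.ne']
      exact mul_lt_mul_of_pos_right hCs (inv_pos.2 hspos)
    linarith
  · intro ℓ hℓ hε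
    exact stmt14_aux x₀ x₁ t₀ t₁ c hx ht hc ℓ hℓ hε
end

section
/- Let D=(x₀,x₁)×(t₀,t₁)⊂ℝ² be a space–time rectangle, ε, μ > 0 constants, c := (εμ)^{−1/2}, j∈ℕ, and p∈ℕ. Let u₀ ∈ C^j on the closure of Ω_D⁻=(x₀−ct₁, x₁−ct₀) and w₀ ∈ C^j on the closure of Ω_D⁺=(x₀+ct₀, x₁+ct₁), and define E(x,t) := (u₀(x−ct)+w₀(x+ct))/(2ε^{1/2}) and H(x,t) := (u₀(x−ct)−w₀(x+ct))/(2μ^{1/2}) on D. Let Φ⁻={φ₀⁻,…,φ_p⁻} and Φ⁺={φ₀⁺,…,φ_p⁺} be sets of p+1 functions of class C^j on the closures of Ω_D⁻ and Ω_D⁺ respectively, and let V_p(D) be the linear span of the pairs (φ_k⁻(x−ct)/(2ε^{1/2}), φ_k⁻(x−ct)/(2μ^{1/2})) and (φ_k⁺(x+ct)/(2ε^{1/2}), −φ_k⁺(x+ct)/(2μ^{1/2})), k=0,…,p. Then inf_{(v_E,v_H)∈V_p(D)} ( |ε^{1/2}(E−v_E)|_{W^{j,∞}_c(D)} + |μ^{1/2}(H−v_H)|_{W^{j,∞}_c(D)}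 ) ≤ inf_{P ∈ span Φ⁻} |u₀−P|_{W^{j,∞}(Ω_D⁻)} + inf_{P ∈ span Φ⁺} |w₀−P|_{W^{j,∞}(Ω_D⁺)}. -/
open MeasureTheory Set

lemma iterDeriv_open_eq {f : ℝ → ℝ} {s : Set ℝ} (hs : IsOpen s) {x : ℝ} (hx : x ∈ s) (n : ℕ) :
    iteratedDerivWithin n f s x = iteratedDeriv n f x := by
  rw [iteratedDerivWithin, iteratedDeriv, iteratedFDerivWithin_of_isOpen n hs hx]

lemma iterDeriv_congr_set {f : ℝ → ℝ} {s t : Set ℝ} {x : ℝ} (h : s =ᶠ[nhds x] t) (n : ℕ) :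
    iteratedDerivWithin n f s x = iteratedDerivWithin n f t x := by
  rw [iteratedDerivWithin, iteratedDerivWithin, iteratedFDerivWithin_congr_set h]

lemma hasDeriv_iter {j k : ℕ} {f : ℝ → ℝ} {s : Set ℝ} (hs : IsOpen s)
    (hf : ContDiffOn ℝ j f s) (hk : k < j) {z : ℝ} (hz : z ∈ s) :
    HasDerivAt (iteratedDeriv k f) (iteratedDeriv (k + 1) f z) z := by
  have hu : UniqueDiffOn ℝ s := hs.uniqueDiffOn
  have h1 : DifferentiableWithinAt ℝ (iteratedDerivWithin k f s) s z :=
    hf.differentiableOn_iteratedDerivWithin (by exact_mod_cast hk) hu z hz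
  have heq : iteratedDerivWithin k f s =ᶠ[nhds z] iteratedDeriv k f :=
    Filter.eventuallyEq_of_mem (hs.mem_nhds hz) (fun y hy => iterDeriv_open_eq hs hy k)
  have h2 : DifferentiableAt ℝ (iteratedDeriv k f) z :=
    (h1.differentiableAt (hs.mem_nhds hz)).congr_of_eventuallyEq heq.symm
  rw [iteratedDeriv_succ]
  exact h2.hasDerivAt

lemma key_pdT {j : ℕ} {f g : ℝ → ℝ} {O₁ O₂ : Set ℝ} (hO₁ : IsOpen O₁) (hO₂ : IsOpen O₂)
    (hf : ContDiffOn ℝ j f O₁) (hg : ContDiffOn ℝ j g O₂) (α β s₁ s₂ : ℝ) :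
    ∀ k, k ≤ j → ∀ x t : ℝ, x + s₁ * t ∈ O₁ → x + s₂ * t ∈ O₂ →
      pdT^[k] (fun x t => α * f (x + s₁ * t) + β * g (x + s₂ * t)) x t
        = α * s₁ ^ k * iteratedDeriv k f (x + s₁ * t)
          + β * s₂ ^ k * iteratedDeriv k g (x + s₂ * t) := by
  intro k
  induction k with
  | zero => intro _ x t _ _; simp
  | succ k ih =>
    intro hk x t h1 h2
    rw [show pdT^[k+1] = fun v => pdT (pdT^[k] v) from funext fun v => Function.iterate_succ_apply' pdT k v]
    have hkj : k ≤ j := Nat.le_of_succ_le hk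
    have hklt : k < j := hk
    have hU : IsOpen ((fun s : ℝ => x + s₁ * s) ⁻¹' O₁ ∩ (fun s : ℝ => x + s₂ * s) ⁻¹' O₂) :=
      (hO₁.preimage (by continuity)).inter (hO₂.preimage (by continuity))
    have htU : t ∈ (fun s : ℝ => x + s₁ * s) ⁻¹' O₁ ∩ (fun s : ℝ => x + s₂ * s) ⁻¹' O₂ := ⟨h1, h2⟩
    have heq : (fun s => pdT^[k] (fun x t => α * f (x + s₁ * t) + β * g (x + s₂ * t)) x s)
        =ᶠ[nhds t] (fun s => α * s₁ ^ k * iteratedDeriv k f (x + s₁ * s)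
          + β * s₂ ^ k * iteratedDeriv k g (x + s₂ * s)) :=
      Filter.eventuallyEq_of_mem (hU.mem_nhds htU) (fun s hs => ih hkj x s hs.1 hs.2)
    have hF : HasDerivAt (fun s : ℝ => iteratedDeriv k f (x + s₁ * s))
        (iteratedDeriv (k+1) f (x + s₁ * t) * s₁) t := by
      have inner : HasDerivAt (fun s : ℝ => x + s₁ * s) s₁ t := by
        simpa using ((hasDerivAt_id t).const_mul s₁).const_add x
      exact HasDerivAt.comp t (hasDeriv_iter hO₁ hf hklt h1) inner
    have hG : HasDerivAt (fun s : ℝ => iteratedDeriv k g (x + s₂ * s))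
        (iteratedDeriv (k+1) g (x + s₂ * t) * s₂) t := by
      have inner : HasDerivAt (fun s : ℝ => x + s₂ * s) s₂ t := by
        simpa using ((hasDerivAt_id t).const_mul s₂).const_add x
      exact HasDerivAt.comp t (hasDeriv_iter hO₂ hg hklt h2) inner
    have hsum : HasDerivAt (fun s => α * s₁ ^ k * iteratedDeriv k f (x + s₁ * s)
          + β * s₂ ^ k * iteratedDeriv k g (x + s₂ * s))
        (α * s₁ ^ k * (iteratedDeriv (k+1) f (x + s₁ * t) * s₁)
          + β * s₂ ^ k * (iteratedDeriv (k+1) g (x + s₂ * t) * s₂)) t :=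
      (hF.const_mul (α * s₁ ^ k)).add (hG.const_mul (β * s₂ ^ k))
    show pdT _ x t = _
    rw [pdT, heq.deriv_eq, hsum.deriv]
    ring

lemma key_pdX {j : ℕ} {f g : ℝ → ℝ} {O₁ O₂ : Set ℝ} (hO₁ : IsOpen O₁) (hO₂ : IsOpen O₂)
    (hf : ContDiffOn ℝ j f O₁) (hg : ContDiffOn ℝ j g O₂) (α β s₁ s₂ : ℝ) :
    ∀ m k, m + k ≤ j → ∀ x t : ℝ, x + s₁ * t ∈ O₁ → x + s₂ * t ∈ O₂ →
      pdX^[m] (pdT^[k] (fun x t => α * f (x + s₁ * t) + β * g (x + s₂ * t))) x t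
        = α * s₁ ^ k * iteratedDeriv (m + k) f (x + s₁ * t)
          + β * s₂ ^ k * iteratedDeriv (m + k) g (x + s₂ * t) := by
  intro m
  induction m with
  | zero =>
    intro k hk x t h1 h2
    simpa using key_pdT hO₁ hO₂ hf hg α β s₁ s₂ k (by omega) x t h1 h2
  | succ m ih =>
    intro k hk x t h1 h2
    rw [show pdX^[m+1] = fun v => pdX (pdX^[m] v) from funext fun v => Function.iterate_succ_apply' pdX m v]
    have hklt : m + k < j := by omega
    have hU : IsOpen ((fun y : ℝ => y + s₁ * t) ⁻¹' O₁ ∩ (fun y : ℝ => y + s₂ * t) ⁻¹' O₂) :=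
      (hO₁.preimage (by continuity)).inter (hO₂.preimage (by continuity))
    have hxU : x ∈ (fun y : ℝ => y + s₁ * t) ⁻¹' O₁ ∩ (fun y : ℝ => y + s₂ * t) ⁻¹' O₂ := ⟨h1, h2⟩
    have heq : (fun y => pdX^[m] (pdT^[k] (fun x t => α * f (x + s₁ * t) + β * g (x + s₂ * t))) y t)
        =ᶠ[nhds x] (fun y => α * s₁ ^ k * iteratedDeriv (m + k) f (y + s₁ * t)
          + β * s₂ ^ k * iteratedDeriv (m + k) g (y + s₂ * t)) :=
      Filter.eventuallyEq_of_mem (hU.mem_nhds hxU) (fun y hy => ih k (by omega) y t hy.1 hy.2)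
    have hF : HasDerivAt (fun y : ℝ => iteratedDeriv (m + k) f (y + s₁ * t))
        (iteratedDeriv (m + k + 1) f (x + s₁ * t) * 1) x := by
      have inner : HasDerivAt (fun y : ℝ => y + s₁ * t) 1 x := (hasDerivAt_id x).add_const _
      exact HasDerivAt.comp x (hasDeriv_iter hO₁ hf hklt h1) inner
    have hG : HasDerivAt (fun y : ℝ => iteratedDeriv (m + k) g (y + s₂ * t))
        (iteratedDeriv (m + k + 1) g (x + s₂ * t) * 1) x := by
      have inner : HasDerivAt (fun y : ℝ => y + s₂ * t) 1 x := (hasDerivAt_id x).add_const _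
      exact HasDerivAt.comp x (hasDeriv_iter hO₂ hg hklt h2) inner
    have hsum := (hF.const_mul (α * s₁ ^ k)).add (hG.const_mul (β * s₂ ^ k))
    show pdX _ x t = _
    rw [pdX, heq.deriv_eq, (show HasDerivAt (fun y => α * s₁ ^ k * iteratedDeriv (m + k) f (y + s₁ * t) + β * s₂ ^ k * iteratedDeriv (m + k) g (y + s₂ * t)) _ x from hsum).deriv]
    have e1 : m + 1 + k = m + k + 1 := by omega
    rw [e1]
    ring

lemma Ioo_eventuallyEq_Icc {a b z : ℝ} (hz : z ∈ Set.Ioo a b) :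
    Set.Ioo a b =ᶠ[nhds z] Set.Icc a b := by
  rw [Filter.eventuallyEq_set]
  filter_upwards [Ioo_mem_nhds hz.1 hz.2] with y hy
  exact iff_of_true hy (Set.Ioo_subset_Icc_self hy)

lemma winf1_facts {j : ℕ} {f : ℝ → ℝ} {a b : ℝ} (hab : a < b)
    (hf : ContDiffOn ℝ j f (Set.Icc a b)) :
    0 ≤ Winf1 j f a b ∧ ∀ z ∈ Set.Ioo a b, |iteratedDeriv j f z| ≤ Winf1 j f a b := by
  have hbdd : BddAbove {r : ℝ | ∃ z ∈ Set.Ioo a b, r = |iteratedDeriv j f z|} := by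
    have hcont : ContinuousOn (iteratedDerivWithin j f (Set.Icc a b)) (Set.Icc a b) :=
      hf.continuousOn_iteratedDerivWithin le_rfl (uniqueDiffOn_Icc hab)
    obtain ⟨M, hM⟩ := (isCompact_Icc).exists_bound_of_continuousOn hcont
    refine ⟨M, fun r hr => ?_⟩
    obtain ⟨z, hz, rfl⟩ := hr
    have h1 : iteratedDeriv j f z = iteratedDerivWithin j f (Set.Icc a b) z := by
      rw [← iterDeriv_open_eq isOpen_Ioo hz j]
      exact iterDeriv_congr_set (Ioo_eventuallyEq_Icc hz) j
    rw [h1]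
    simpa [Real.norm_eq_abs] using hM z (Set.Ioo_subset_Icc_self hz)
  constructor
  · exact Real.sSup_nonneg (by rintro r ⟨z, hz, rfl⟩; positivity)
  · intro z hz
    exact le_csSup hbdd ⟨z, hz, rfl⟩

lemma winfC_bound {x₀ x₁ t₀ t₁ c : ℝ} (hx : x₀ < x₁) (ht : t₀ < t₁) (hc : 0 < c)
    {j : ℕ} {f g : ℝ → ℝ}
    (hf : ContDiffOn ℝ j f (Set.Icc (x₀ - c * t₁) (x₁ - c * t₀)))
    (hg : ContDiffOn ℝ j g (Set.Icc (x₀ + c * t₀) (x₁ + c * t₁)))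
    (β : ℝ) (hβ : |β| = 1/2) :
    WinfC c j (fun x t => (1/2) * f (x - c * t) + β * g (x + c * t)) x₀ x₁ t₀ t₁
      ≤ (Winf1 j f (x₀ - c * t₁) (x₁ - c * t₀) + Winf1 j g (x₀ + c * t₀) (x₁ + c * t₁)) / 2 := by
  have hab₁ : x₀ - c * t₁ < x₁ - c * t₀ := by nlinarith
  have hab₂ : x₀ + c * t₀ < x₁ + c * t₁ := by nlinarith
  obtain ⟨hW₁0, hW₁⟩ := winf1_facts hab₁ hf
  obtain ⟨hW₂0, hW₂⟩ := winf1_facts hab₂ hg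
  have hfun : (fun x t => (1/2) * f (x - c * t) + β * g (x + c * t))
      = (fun x t => (1/2) * f (x + (-c) * t) + β * g (x + c * t)) := by
    funext x t; rw [show x - c * t = x + (-c) * t by ring]
  rw [hfun]
  apply Real.sSup_le _ (by linarith)
  rintro r ⟨ax, at', hsum, x, hx', t, ht', rfl⟩
  have hfO : ContDiffOn ℝ (j : ℕ) f (Set.Ioo (x₀ - c * t₁) (x₁ - c * t₀)) :=
    hf.mono Set.Ioo_subset_Icc_self
  have hgO : ContDiffOn ℝ (j : ℕ) g (Set.Ioo (x₀ + c * t₀) (x₁ + c * t₁)) :=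
    hg.mono Set.Ioo_subset_Icc_self
  have h1 : x + (-c) * t ∈ Set.Ioo (x₀ - c * t₁) (x₁ - c * t₀) := by
    constructor <;> nlinarith [hx'.1, hx'.2, ht'.1, ht'.2]
  have h2 : x + c * t ∈ Set.Ioo (x₀ + c * t₀) (x₁ + c * t₁) := by
    constructor <;> nlinarith [hx'.1, hx'.2, ht'.1, ht'.2]
  have hkey := key_pdX isOpen_Ioo isOpen_Ioo hfO hgO (1/2) β (-c) c ax at' (by omega) x t h1 h2
  rw [hsum] at hkey
  have hcn : (c : ℝ) ^ at' ≠ 0 := pow_ne_zero _ (ne_of_gt hc)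
  have hDc : Dc c ax at' (fun x t => (1/2) * f (x + (-c) * t) + β * g (x + c * t)) x t
      = (1/2) * (-1:ℝ)^at' * iteratedDeriv j f (x + (-c) * t)
        + β * iteratedDeriv j g (x + c * t) := by
    rw [Dc, hkey, neg_pow]
    field_simp
  rw [hDc]
  calc |(1/2) * (-1:ℝ)^at' * iteratedDeriv j f (x + (-c) * t) + β * iteratedDeriv j g (x + c * t)|
      ≤ |(1/2) * (-1:ℝ)^at' * iteratedDeriv j f (x + (-c) * t)|
        + |β * iteratedDeriv j g (x + c * t)| := abs_add_le _ _
    _ = (1/2) * |iteratedDeriv j f (x + (-c) * t)| + (1/2) * |iteratedDeriv j g (x + c * t)| := by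
        rw [abs_mul, abs_mul, abs_mul, hβ, abs_pow, abs_neg, abs_one, one_pow]
        norm_num
    _ ≤ (1/2) * Winf1 j f (x₀ - c * t₁) (x₁ - c * t₀)
        + (1/2) * Winf1 j g (x₀ + c * t₀) (x₁ + c * t₁) := by
        have := hW₁ _ h1
        have := hW₂ _ h2
        nlinarith
    _ = _ := by ring

lemma winfC_nonneg (c : ℝ) (j : ℕ) (v : ℝ → ℝ → ℝ) (x₀ x₁ t₀ t₁ : ℝ) :
    0 ≤ WinfC c j v x₀ x₁ t₀ t₁ :=
  Real.sSup_nonneg (by rintro r ⟨ax, at', _, x, _, t, _, rfl⟩; positivity)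

lemma contDiffOn_span {j : ℕ} {s : Set ℝ} {ι : Type*} {φ : ι → ℝ → ℝ}
    (hφ : ∀ k, ContDiffOn ℝ j (φ k) s) {P : ℝ → ℝ}
    (hP : P ∈ Submodule.span ℝ (Set.range φ)) : ContDiffOn ℝ j P s := by
  induction hP using Submodule.span_induction with
  | mem x hx => obtain ⟨k, rfl⟩ := hx; exact hφ k
  | zero => exact contDiffOn_const
  | add x y _ _ hx hy => exact hx.add hy
  | smul r x _ hx => exact hx.const_smul r

noncomputable def LMn (c sε sμ : ℝ) : (ℝ → ℝ) →ₗ[ℝ] (ℝ → ℝ → ℝ) × (ℝ → ℝ → ℝ) where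
  toFun P := ((fun x t => P (x - c * t) / (2 * sε)), (fun x t => P (x - c * t) / (2 * sμ)))
  map_add' P Q := by
    refine Prod.ext ?_ ?_ <;> funext x t <;> simp [Pi.add_apply] <;> ring
  map_smul' r P := by
    refine Prod.ext ?_ ?_ <;> funext x t <;> simp [Pi.smul_apply, smul_eq_mul] <;> ring

noncomputable def LMp (c sε sμ : ℝ) : (ℝ → ℝ) →ₗ[ℝ] (ℝ → ℝ → ℝ) × (ℝ → ℝ → ℝ) where
  toFun P := ((fun x t => P (x + c * t) / (2 * sε)), (fun x t => - P (x + c * t) / (2 * sμ)))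
  map_add' P Q := by
    refine Prod.ext ?_ ?_ <;> funext x t <;> simp [Pi.add_apply] <;> ring
  map_smul' r P := by
    refine Prod.ext ?_ ?_ <;> funext x t <;> simp [Pi.smul_apply, smul_eq_mul] <;> ring

theorem stmt15 (x₀ x₁ t₀ t₁ ε μ c : ℝ) (hx : x₀ < x₁) (ht : t₀ < t₁)
    (hε : 0 < ε) (hμ : 0 < μ) (hc : c = (Real.sqrt (ε * μ))⁻¹)
    (j p : ℕ) (u₀ w₀ : ℝ → ℝ)
    (hu₀ : ContDiffOn ℝ j u₀ (Set.Icc (x₀ - c * t₁) (x₁ - c * t₀)))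
    (hw₀ : ContDiffOn ℝ j w₀ (Set.Icc (x₀ + c * t₀) (x₁ + c * t₁)))
    (φn φp : Fin (p + 1) → ℝ → ℝ)
    (hφn : ∀ k, ContDiffOn ℝ j (φn k) (Set.Icc (x₀ - c * t₁) (x₁ - c * t₀)))
    (hφp : ∀ k, ContDiffOn ℝ j (φp k) (Set.Icc (x₀ + c * t₀) (x₁ + c * t₁)))
    (E H : ℝ → ℝ → ℝ)
    (hE : E = fun x t => (u₀ (x - c * t) + w₀ (x + c * t)) / (2 * Real.sqrt ε))
    (hH : H = fun x t => (u₀ (x - c * t) - w₀ (x + c * t)) / (2 * Real.sqrt μ))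
    (Vp : Submodule ℝ ((ℝ → ℝ → ℝ) × (ℝ → ℝ → ℝ)))
    (hVp : Vp = Submodule.span ℝ
      (Set.range (fun k : Fin (p + 1) =>
        ((fun x t => φn k (x - c * t) / (2 * Real.sqrt ε)),
         (fun x t => φn k (x - c * t) / (2 * Real.sqrt μ)))) ∪
       Set.range (fun k : Fin (p + 1) =>
        ((fun x t => φp k (x + c * t) / (2 * Real.sqrt ε)),
         (fun x t => - φp k (x + c * t) / (2 * Real.sqrt μ)))))) :
    sInf {r : ℝ | ∃ v ∈ Vp,
        r = WinfC c j (fun x t => Real.sqrt ε * (E x t - v.1 x t)) x₀ x₁ t₀ t₁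
          + WinfC c j (fun x t => Real.sqrt μ * (H x t - v.2 x t)) x₀ x₁ t₀ t₁}
      ≤ sInf {r : ℝ | ∃ P ∈ Submodule.span ℝ (Set.range φn),
            r = Winf1 j (fun z => u₀ z - P z) (x₀ - c * t₁) (x₁ - c * t₀)}
        + sInf {r : ℝ | ∃ P ∈ Submodule.span ℝ (Set.range φp),
            r = Winf1 j (fun z => w₀ z - P z) (x₀ + c * t₀) (x₁ + c * t₁)} := by
  have hsεμ : (0:ℝ) < Real.sqrt (ε * μ) := Real.sqrt_pos.mpr (mul_pos hε hμ)
  have hcpos : 0 < c := by rw [hc]; exact inv_pos.mpr hsεμ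
  have hsε : (0:ℝ) < Real.sqrt ε := Real.sqrt_pos.mpr hε
  have hsμ : (0:ℝ) < Real.sqrt μ := Real.sqrt_pos.mpr hμ
  set S₁ := {r : ℝ | ∃ P ∈ Submodule.span ℝ (Set.range φn),
      r = Winf1 j (fun z => u₀ z - P z) (x₀ - c * t₁) (x₁ - c * t₀)} with hS₁
  set S₂ := {r : ℝ | ∃ P ∈ Submodule.span ℝ (Set.range φp),
      r = Winf1 j (fun z => w₀ z - P z) (x₀ + c * t₀) (x₁ + c * t₁)} with hS₂
  set L := {r : ℝ | ∃ v ∈ Vp,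
      r = WinfC c j (fun x t => Real.sqrt ε * (E x t - v.1 x t)) x₀ x₁ t₀ t₁
        + WinfC c j (fun x t => Real.sqrt μ * (H x t - v.2 x t)) x₀ x₁ t₀ t₁} with hL
  have hS₁ne : S₁.Nonempty := ⟨_, 0, Submodule.zero_mem _, rfl⟩
  have hS₂ne : S₂.Nonempty := ⟨_, 0, Submodule.zero_mem _, rfl⟩
  have hLbdd : BddBelow L := by
    refine ⟨0, ?_⟩
    rintro r ⟨v, _, rfl⟩
    have h1 := winfC_nonneg c j (fun x t => Real.sqrt ε * (E x t - v.1 x t)) x₀ x₁ t₀ t₁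
    have h2 := winfC_nonneg c j (fun x t => Real.sqrt μ * (H x t - v.2 x t)) x₀ x₁ t₀ t₁
    linarith
  -- the key step
  have key : ∀ r₁ ∈ S₁, ∀ r₂ ∈ S₂, sInf L ≤ r₁ + r₂ := by
    rintro r₁ ⟨P₁, hP₁, rfl⟩ r₂ ⟨P₂, hP₂, rfl⟩
    set f : ℝ → ℝ := fun z => u₀ z - P₁ z with hfdef
    set g : ℝ → ℝ := fun z => w₀ z - P₂ z with hgdef
    have hfC : ContDiffOn ℝ j f (Set.Icc (x₀ - c * t₁) (x₁ - c * t₀)) :=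
      hu₀.sub (contDiffOn_span hφn hP₁)
    have hgC : ContDiffOn ℝ j g (Set.Icc (x₀ + c * t₀) (x₁ + c * t₁)) :=
      hw₀.sub (contDiffOn_span hφp hP₂)
    set v : (ℝ → ℝ → ℝ) × (ℝ → ℝ → ℝ) :=
      LMn c (Real.sqrt ε) (Real.sqrt μ) P₁ + LMp c (Real.sqrt ε) (Real.sqrt μ) P₂ with hvdef
    have hvmem : v ∈ Vp := by
      have hn : Submodule.span ℝ (Set.range φn)
          ≤ Vp.comap (LMn c (Real.sqrt ε) (Real.sqrt μ)) := by
        rw [Submodule.span_le]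
        rintro _ ⟨k, rfl⟩
        simp only [SetLike.mem_coe, Submodule.mem_comap]
        rw [hVp]
        exact Submodule.subset_span (Or.inl ⟨k, rfl⟩)
      have hp : Submodule.span ℝ (Set.range φp)
          ≤ Vp.comap (LMp c (Real.sqrt ε) (Real.sqrt μ)) := by
        rw [Submodule.span_le]
        rintro _ ⟨k, rfl⟩
        simp only [SetLike.mem_coe, Submodule.mem_comap]
        rw [hVp]
        exact Submodule.subset_span (Or.inr ⟨k, rfl⟩)
      exact Submodule.add_mem _ (hn hP₁) (hp hP₂)
    have hfun1 : (fun x t => Real.sqrt ε * (E x t - v.1 x t))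
        = fun x t => (1/2) * f (x - c * t) + (1/2) * g (x + c * t) := by
      funext x t
      have hv1 : v.1 x t = P₁ (x - c * t) / (2 * Real.sqrt ε)
          + P₂ (x + c * t) / (2 * Real.sqrt ε) := rfl
      rw [hE, hv1, hfdef, hgdef]
      field_simp
      ring
    have hfun2 : (fun x t => Real.sqrt μ * (H x t - v.2 x t))
        = fun x t => (1/2) * f (x - c * t) + (-(1/2)) * g (x + c * t) := by
      funext x t
      have hv2 : v.2 x t = P₁ (x - c * t) / (2 * Real.sqrt μ)
          + (- P₂ (x + c * t)) / (2 * Real.sqrt μ) := rfl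
      rw [hH, hv2, hfdef, hgdef]
      field_simp
      ring
    have hb1 := winfC_bound hx ht hcpos hfC hgC (1/2) (by norm_num)
    have hb2 := winfC_bound hx ht hcpos hfC hgC (-(1/2)) (by rw [abs_neg]; norm_num)
    have hmem : WinfC c j (fun x t => Real.sqrt ε * (E x t - v.1 x t)) x₀ x₁ t₀ t₁
        + WinfC c j (fun x t => Real.sqrt μ * (H x t - v.2 x t)) x₀ x₁ t₀ t₁ ∈ L :=
      ⟨v, hvmem, rfl⟩
    have := csInf_le hLbdd hmem
    rw [hfun1, hfun2] at this
    calc sInf L ≤ _ := this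
      _ ≤ (Winf1 j f (x₀ - c * t₁) (x₁ - c * t₀) + Winf1 j g (x₀ + c * t₀) (x₁ + c * t₁)) / 2
          + (Winf1 j f (x₀ - c * t₁) (x₁ - c * t₀) + Winf1 j g (x₀ + c * t₀) (x₁ + c * t₁)) / 2 :=
          add_le_add hb1 hb2
      _ = _ := by ring
  have h2 : ∀ r₁ ∈ S₁, sInf L - r₁ ≤ sInf S₂ := fun r₁ h₁ =>
    le_csInf hS₂ne (fun r₂ h₂ => by linarith [key r₁ h₁ r₂ h₂])
  have h3 : sInf L - sInf S₂ ≤ sInf S₁ :=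
    le_csInf hS₁ne (fun r₁ h₁ => by linarith [h2 r₁ h₁])
  linarith
end
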